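/- arXiv:2305.08742 — 4 statements merged into one kernel-verified Lean document; each statement's English description precedes it below -/
import Mathlib

section
/- Let f be a strictly convex standard self-concordant function on ℝⁿ attaining its minimum at x*. If the Newton decrement satisfies λ(x) < 1, then ω(λ(x)) ≤ f(x) − f(x*) ≤ ω*(λ(x)), where ω(t) := t − log(1 + t) and ω*(t) := −t − log(1 − t). If moreover λ(x) ≤ 0.68, then f(x) − f(x*) ≤ λ(x)². -/
open Matrix

section SCAux

open Real Set Matrix


lemma sc_one_dim (φ : ℝ → ℝ) (hφ : ContDiff ℝ 3 φ)
    (hpos : ∀ t, 0 < iteratedDeriv 2 φ t)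
    (hsc : ∀ t, |iteratedDeriv 3 φ t| ≤ 2 * iteratedDeriv 2 φ t ^ ((3:ℝ)/2)) :
    (φ 0 + deriv φ 0 + (Real.sqrt (iteratedDeriv 2 φ 0)
        - Real.log (1 + Real.sqrt (iteratedDeriv 2 φ 0))) ≤ φ 1) ∧
    (Real.sqrt (iteratedDeriv 2 φ 0) < 1 →
      φ 1 ≤ φ 0 + deriv φ 0 + (-Real.sqrt (iteratedDeriv 2 φ 0)
        - Real.log (1 - Real.sqrt (iteratedDeriv 2 φ 0)))) := by
  set A := iteratedDeriv 2 φ with hA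
  set c := Real.sqrt (A 0) with hc
  have hc0 : 0 < c := Real.sqrt_pos.2 (hpos 0)
  -- differentiability facts
  have hφ' : ContDiff ℝ 2 (deriv φ) := by
    rw [show (3 : WithTop ℕ∞) = 2 + 1 by norm_num, contDiff_succ_iff_deriv] at hφ
    exact hφ.2.2
  have hφ'' : ContDiff ℝ 1 (deriv (deriv φ)) := by
    rw [show (2 : WithTop ℕ∞) = 1 + 1 by norm_num, contDiff_succ_iff_deriv] at hφ'
    exact hφ'.2.2
  have hAeq : A = deriv (deriv φ) := by rw [hA, iteratedDeriv_succ, iteratedDeriv_one]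
  have hd1 : ∀ t, HasDerivAt φ (deriv φ t) t := fun t =>
    ((hφ.differentiable (by norm_num)) t).hasDerivAt
  have hd2 : ∀ t, HasDerivAt (deriv φ) (A t) t := fun t => by
    rw [hAeq]; exact ((hφ'.differentiable (by norm_num)) t).hasDerivAt
  have hd3 : ∀ t, HasDerivAt A (iteratedDeriv 3 φ t) t := fun t => by
    have h3 : iteratedDeriv 3 φ = deriv A := by rw [iteratedDeriv_succ, hA]
    rw [h3, hAeq]
    exact ((hφ''.differentiable (by norm_num)) t).hasDerivAt
  -- ψ and its derivative
  set ψ : ℝ → ℝ := fun t => (Real.sqrt (A t))⁻¹ with hψ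
  have hsq : ∀ t, 0 < Real.sqrt (A t) := fun t => Real.sqrt_pos.2 (hpos t)
  have hψpos : ∀ t, 0 < ψ t := fun t => inv_pos.2 (hsq t)
  have hψd : ∀ t, HasDerivAt ψ (-(iteratedDeriv 3 φ t) / (2 * (A t * Real.sqrt (A t)))) t := by
    intro t
    have h1 : HasDerivAt (fun s => Real.sqrt (A s)) (1 / (2 * Real.sqrt (A t)) * iteratedDeriv 3 φ t) t :=
      (Real.hasDerivAt_sqrt (ne_of_gt (hpos t))).comp t (hd3 t)
    have h2 := h1.inv (ne_of_gt (hsq t))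
    refine h2.congr_deriv ?_
    rw [Real.sq_sqrt (le_of_lt (hpos t))]
    have h4 := hsq t
    have h5 := hpos t
    field_simp
  have hr32 : ∀ t, (A t) ^ ((3:ℝ)/2) = A t * Real.sqrt (A t) := fun t => by
    rw [show (3:ℝ)/2 = 1 + 1/2 by norm_num, Real.rpow_add (hpos t), Real.rpow_one,
      ← Real.sqrt_eq_rpow]
  have hψbd : ∀ t, ‖-(iteratedDeriv 3 φ t) / (2 * (A t * Real.sqrt (A t)))‖ ≤ 1 := by
    intro t
    have h1 := hsc t
    rw [hr32 t] at h1
    have h2 : 0 < 2 * (A t * Real.sqrt (A t)) := by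
      have := hpos t; have := hsq t; positivity
    rw [Real.norm_eq_abs, abs_div, abs_neg, abs_of_pos h2, div_le_one h2]
    linarith
  have hlip : ∀ t ∈ Icc (0:ℝ) 1, ‖ψ t - ψ 0‖ ≤ 1 * (t - 0) :=
    norm_image_sub_le_of_norm_deriv_le_segment'
      (fun s _ => (hψd s).hasDerivWithinAt) (fun s _ => hψbd s)
  have hψ0 : ψ 0 = c⁻¹ := rfl
  have habs : ∀ t ∈ Icc (0:ℝ) 1, ψ t ≤ c⁻¹ + t ∧ c⁻¹ - t ≤ ψ t := by
    intro t ht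
    have h0 := hlip t ht
    rw [Real.norm_eq_abs] at h0
    have h1 := abs_le.1 (by linarith : |ψ t - ψ 0| ≤ t - 0)
    rw [hψ0] at h1
    constructor <;> linarith [h1.1, h1.2]
  -- lower bound on A
  have hAlow : ∀ t ∈ Icc (0:ℝ) 1, c^2 / (1 + c*t)^2 ≤ A t := by
    intro t ht
    have h1 := (habs t ht).1
    have ht0 := ht.1
    have hct : (0:ℝ) < c⁻¹ + t := by positivity
    have key : (c⁻¹ + t)⁻¹ ≤ Real.sqrt (A t) := by
      have h2 : (c⁻¹ + t)⁻¹ ≤ (ψ t)⁻¹ := inv_anti₀ (hψpos t) h1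
      rwa [hψ, inv_inv] at h2
    have h6 : ((c⁻¹ + t)⁻¹)^2 ≤ (Real.sqrt (A t))^2 :=
      pow_le_pow_left₀ (by positivity) key 2
    rw [Real.sq_sqrt (le_of_lt (hpos t))] at h6
    have hne : (1 + c*t) ≠ 0 := by nlinarith [hc0, ht.1]
    have h7 : c^2/(1+c*t)^2 = ((c⁻¹ + t)⁻¹)^2 := by
      field_simp
    linarith [h6, le_of_eq h7]
  -- upper bound on A (needs c < 1)
  have hAupp : c < 1 → ∀ t ∈ Icc (0:ℝ) 1, A t ≤ c^2 / (1 - c*t)^2 := by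
    intro hc1 t ht
    have h1 := (habs t ht).2
    have hct : (0:ℝ) < c⁻¹ - t := by
      have : (1:ℝ) < c⁻¹ := (one_lt_inv₀ hc0).2 hc1
      linarith [ht.2]
    have key : Real.sqrt (A t) ≤ (c⁻¹ - t)⁻¹ := by
      have h2 : (ψ t)⁻¹ ≤ (c⁻¹ - t)⁻¹ := inv_anti₀ hct h1
      rwa [hψ, inv_inv] at h2
    have h6 : (Real.sqrt (A t))^2 ≤ ((c⁻¹ - t)⁻¹)^2 :=
      pow_le_pow_left₀ (by positivity) key 2
    rw [Real.sq_sqrt (le_of_lt (hpos t))] at h6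
    have h7 : c^2/(1-c*t)^2 = ((c⁻¹ - t)⁻¹)^2 := by
      have hne : (1 - c*t) ≠ 0 := by
        have : 0 < 1 - c*t := by
          have h8 : c * t < 1 := by
            calc c * t ≤ c * 1 := by nlinarith [ht.1, ht.2, hc0]
            _ < 1 := by linarith
          linarith
        linarith
      field_simp
    linarith [h6, le_of_eq h7]
  have hzero : (0:ℝ) ∈ Icc (0:ℝ) 1 := by constructor <;> norm_num
  have hone : (1:ℝ) ∈ Icc (0:ℝ) 1 := by constructor <;> norm_num
  constructor
  · -- lower bound
    set G : ℝ → ℝ := fun t => deriv φ t - deriv φ 0 - c + c * (1 + c * t)⁻¹ with hG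
    have hGd : ∀ t ∈ Icc (0:ℝ) 1, HasDerivAt G (A t - c^2/(1+c*t)^2) t := by
      intro t ht
      have hne : (1 + c*t) ≠ 0 := by nlinarith [hc0, ht.1]
      have hl : HasDerivAt (fun s : ℝ => 1 + c * s) c t := by
        simpa using ((hasDerivAt_id t).const_mul c).const_add 1
      have hinv : HasDerivAt (fun s : ℝ => (1 + c * s)⁻¹) (-c / (1+c*t)^2) t := hl.inv hne
      have hcomb := (((hd2 t).sub_const (deriv φ 0)).sub_const c).add (hinv.const_mul c)
      refine hcomb.congr_deriv ?_
      field_simp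
      ring
    have hGmono : MonotoneOn G (Icc (0:ℝ) 1) := by
      apply monotoneOn_of_deriv_nonneg (convex_Icc 0 1)
      · intro t ht; exact (hGd t ht).continuousAt.continuousWithinAt
      · intro t ht
        rw [interior_Icc] at ht
        exact ((hGd t (Ioo_subset_Icc_self ht)).differentiableAt).differentiableWithinAt
      · intro t ht
        rw [interior_Icc] at ht
        rw [(hGd t (Ioo_subset_Icc_self ht)).deriv]
        linarith [hAlow t (Ioo_subset_Icc_self ht)]
    have hG0 : G 0 = 0 := by simp [hG]
    have hGnn : ∀ t ∈ Icc (0:ℝ) 1, 0 ≤ G t := by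
      intro t ht
      have := hGmono hzero ht ht.1
      rwa [hG0] at this
    set F : ℝ → ℝ := fun t => φ t - φ 0 - deriv φ 0 * t - (c*t - Real.log (1 + c*t)) with hF
    have hFd : ∀ t ∈ Icc (0:ℝ) 1, HasDerivAt F (G t) t := by
      intro t ht
      have hne : (1 + c*t) ≠ 0 := by nlinarith [hc0, ht.1]
      have hl : HasDerivAt (fun s : ℝ => 1 + c * s) c t := by
        simpa using ((hasDerivAt_id t).const_mul c).const_add 1
      have hlog : HasDerivAt (fun s : ℝ => Real.log (1 + c*s)) (c/(1+c*t)) t := hl.log hne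
      have hlin : HasDerivAt (fun s : ℝ => deriv φ 0 * s) (deriv φ 0) t := by
        simpa using (hasDerivAt_id t).const_mul (deriv φ 0)
      have hlin2 : HasDerivAt (fun s : ℝ => c * s) c t := by
        simpa using (hasDerivAt_id t).const_mul c
      have hcomb := (((hd1 t).sub_const (φ 0)).sub hlin).sub (hlin2.sub hlog)
      refine hcomb.congr_deriv ?_
      simp only [hG]
      field_simp
      ring
    have hFmono : MonotoneOn F (Icc (0:ℝ) 1) := by
      apply monotoneOn_of_deriv_nonneg (convex_Icc 0 1)
      · intro t ht; exact (hFd t ht).continuousAt.continuousWithinAt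
      · intro t ht
        rw [interior_Icc] at ht
        exact ((hFd t (Ioo_subset_Icc_self ht)).differentiableAt).differentiableWithinAt
      · intro t ht
        rw [interior_Icc] at ht
        rw [(hFd t (Ioo_subset_Icc_self ht)).deriv]
        exact hGnn t (Ioo_subset_Icc_self ht)
    have hF0 : F 0 = 0 := by simp [hF]
    have hF1 := hFmono hzero hone (by norm_num : (0:ℝ) ≤ 1)
    rw [hF0] at hF1
    simp only [hF, mul_one] at hF1
    linarith
  · -- upper bound
    intro hc1
    have hneI : ∀ t ∈ Icc (0:ℝ) 1, (1 - c*t) ≠ 0 := by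
      intro t ht
      have h8 : c * t < 1 := by nlinarith [ht.1, ht.2, hc0]
      intro h; rw [sub_eq_zero] at h; exact absurd h.symm (ne_of_lt h8)
    set G : ℝ → ℝ := fun t => deriv φ 0 - deriv φ t - c + c * (1 - c * t)⁻¹ with hG
    have hGd : ∀ t ∈ Icc (0:ℝ) 1, HasDerivAt G (c^2/(1-c*t)^2 - A t) t := by
      intro t ht
      have hne := hneI t ht
      have hl : HasDerivAt (fun s : ℝ => 1 - c * s) (-c) t := by
        simpa using (((hasDerivAt_id t).const_mul c).const_sub 1)
      have hinv : HasDerivAt (fun s : ℝ => (1 - c * s)⁻¹) (-(-c) / (1-c*t)^2) t := hl.inv hne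
      have hcomb := ((((hasDerivAt_const t (deriv φ 0)).sub (hd2 t)).sub_const c)).add
        (hinv.const_mul c)
      refine hcomb.congr_deriv ?_
      field_simp
      ring
    have hGmono : MonotoneOn G (Icc (0:ℝ) 1) := by
      apply monotoneOn_of_deriv_nonneg (convex_Icc 0 1)
      · intro t ht; exact (hGd t ht).continuousAt.continuousWithinAt
      · intro t ht
        rw [interior_Icc] at ht
        exact ((hGd t (Ioo_subset_Icc_self ht)).differentiableAt).differentiableWithinAt
      · intro t ht
        rw [interior_Icc] at ht
        rw [(hGd t (Ioo_subset_Icc_self ht)).deriv]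
        linarith [hAupp hc1 t (Ioo_subset_Icc_self ht)]
    have hG0 : G 0 = 0 := by simp [hG]
    have hGnn : ∀ t ∈ Icc (0:ℝ) 1, 0 ≤ G t := by
      intro t ht
      have := hGmono hzero ht ht.1
      rwa [hG0] at this
    set F : ℝ → ℝ := fun t => φ 0 + deriv φ 0 * t - c*t - Real.log (1 - c*t) - φ t with hF
    have hFd : ∀ t ∈ Icc (0:ℝ) 1, HasDerivAt F (G t) t := by
      intro t ht
      have hne := hneI t ht
      have hl : HasDerivAt (fun s : ℝ => 1 - c * s) (-c) t := by
        simpa using (((hasDerivAt_id t).const_mul c).const_sub 1)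
      have hlog : HasDerivAt (fun s : ℝ => Real.log (1 - c*s)) (-c/(1-c*t)) t := hl.log hne
      have hlin : HasDerivAt (fun s : ℝ => deriv φ 0 * s) (deriv φ 0) t := by
        simpa using (hasDerivAt_id t).const_mul (deriv φ 0)
      have hlin2 : HasDerivAt (fun s : ℝ => c * s) c t := by
        simpa using (hasDerivAt_id t).const_mul c
      have hcomb := ((((hlin.const_add (φ 0)).sub hlin2).sub hlog)).sub (hd1 t)
      refine hcomb.congr_deriv ?_
      simp only [hG]
      field_simp
      ring
    have hFmono : MonotoneOn F (Icc (0:ℝ) 1) := by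
      apply monotoneOn_of_deriv_nonneg (convex_Icc 0 1)
      · intro t ht; exact (hFd t ht).continuousAt.continuousWithinAt
      · intro t ht
        rw [interior_Icc] at ht
        exact ((hFd t (Ioo_subset_Icc_self ht)).differentiableAt).differentiableWithinAt
      · intro t ht
        rw [interior_Icc] at ht
        rw [(hFd t (Ioo_subset_Icc_self ht)).deriv]
        exact hGnn t (Ioo_subset_Icc_self ht)
    have hF0 : F 0 = 0 := by simp [hF]
    have hF1 := hFmono hzero hone (by norm_num : (0:ℝ) ≤ 1)
    rw [hF0] at hF1
    simp only [hF, mul_one] at hF1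
    linarith

lemma pd_quad {n : ℕ} (M : Matrix (Fin n) (Fin n) ℝ) (hM : M.PosDef)
    (u : Fin n → ℝ) (hu : u ≠ 0) : 0 < u ⬝ᵥ (M *ᵥ u) := by
  have := hM.dotProduct_mulVec_pos hu
  simpa using this

lemma line_contDiff {n : ℕ} (f : (Fin n → ℝ) → ℝ) (hf : ContDiff ℝ 3 f) (x0 u : Fin n → ℝ) :
    ContDiff ℝ 3 (fun t : ℝ => f (x0 + t • u)) :=
  hf.comp (contDiff_const.add (contDiff_id.smul contDiff_const))

lemma line_second {n : ℕ} (f : (Fin n → ℝ) → ℝ)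
    (hess : (Fin n → ℝ) → Matrix (Fin n) (Fin n) ℝ)
    (hhessq : ∀ x u : Fin n → ℝ,
      iteratedDeriv 2 (fun t : ℝ => f (x + t • u)) 0 = u ⬝ᵥ (hess x *ᵥ u))
    (x0 u : Fin n → ℝ) (t : ℝ) :
    iteratedDeriv 2 (fun s : ℝ => f (x0 + s • u)) t = u ⬝ᵥ (hess (x0 + t • u) *ᵥ u) := by
  have h1 := congrFun (iteratedDeriv_comp_add_const 2 (fun s : ℝ => f (x0 + s • u)) t) 0
  simp only [zero_add] at h1
  rw [← h1]
  have h2 : (fun z : ℝ => (fun s : ℝ => f (x0 + s • u)) (z + t)) =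
      fun z : ℝ => f ((x0 + t • u) + z • u) := by
    funext z
    simp only []
    congr 1
    rw [add_smul]
    abel
  rw [h2, hhessq]

-- endpoint numeric fact
lemma endpoint_log : (0:ℝ) ≤ 0.68 + 0.68^2 + Real.log (1 - 0.68) := by
  have hexp : (3.125:ℝ) ≤ Real.exp 1.1424 := by
    have e1 : (2.7182818283:ℝ) < Real.exp 1 := Real.exp_one_gt_d9
    have e2 : (1:ℝ) + 0.1424 + 0.1424^2/2 ≤ Real.exp 0.1424 := by
      have := Real.sum_le_exp_of_nonneg (by norm_num : (0:ℝ) ≤ 0.1424) 3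
      simp [Finset.sum_range_succ, Nat.factorial] at this
      nlinarith [this]
    have e3 : Real.exp 1.1424 = Real.exp 1 * Real.exp 0.1424 := by
      rw [← Real.exp_add]; norm_num
    nlinarith [Real.exp_pos 1, Real.exp_pos (0.1424:ℝ)]
  have hlog : (-1.1424:ℝ) ≤ Real.log (1 - 0.68) := by
    rw [Real.le_log_iff_exp_le (by norm_num : (0:ℝ) < 1 - 0.68)]
    rw [show (-1.1424:ℝ) = -(1.1424) by norm_num, Real.exp_neg]
    have h := inv_anti₀ (by norm_num : (0:ℝ) < 3.125) hexp
    calc (Real.exp 1.1424)⁻¹ ≤ (3.125:ℝ)⁻¹ := h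
    _ ≤ 1 - 0.68 := by norm_num
  nlinarith [hlog]

-- young
lemma young_ineq (l r : ℝ) (hl0 : 0 ≤ l) (hl1 : l < 1) (hr : 0 ≤ r) :
    l * r ≤ (r - Real.log (1+r)) + (-l - Real.log (1-l)) := by
  have h1 : (0:ℝ) < 1 + r := by linarith
  have h2 : (0:ℝ) < 1 - l := by linarith
  have h3 := Real.log_le_sub_one_of_pos (mul_pos h1 h2)
  rw [Real.log_mul (ne_of_gt h1) (ne_of_gt h2)] at h3
  nlinarith [h3]

end SCAux

/-- Let `f` be a strictly convex standard self-concordant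
function attaining its minimum at `x*`.  If the Newton decrement satisfies
`λ(x) < 1`, then `ω(λ(x)) ≤ f(x) − f(x*) ≤ ω*(λ(x))` with
`ω(t) = t − log(1+t)` and `ω*(t) = −t − log(1−t)`; if moreover `λ(x) ≤ 0.68`
then `f(x) − f(x*) ≤ λ(x)²`. -/
theorem stmt15 {n : ℕ}
    (f : (Fin n → ℝ) → ℝ) (grad : (Fin n → ℝ) → Fin n → ℝ)
    (hess : (Fin n → ℝ) → Matrix (Fin n) (Fin n) ℝ)
    (hf : ContDiff ℝ 3 f)
    (hconv : StrictConvexOn ℝ Set.univ f)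
    (hgrad : ∀ x u : Fin n → ℝ, deriv (fun t : ℝ => f (x + t • u)) 0 = grad x ⬝ᵥ u)
    (hhessq : ∀ x u : Fin n → ℝ,
      iteratedDeriv 2 (fun t : ℝ => f (x + t • u)) 0 = u ⬝ᵥ (hess x *ᵥ u))
    (hhsymm : ∀ x, (hess x).IsSymm)
    (hhpd : ∀ x, (hess x).PosDef)
    (hsc : ∀ x u : Fin n → ℝ, ∀ t : ℝ,
      |iteratedDeriv 3 (fun s : ℝ => f (x + s • u)) t|
        ≤ 2 * iteratedDeriv 2 (fun s : ℝ => f (x + s • u)) t ^ ((3 : ℝ) / 2))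
    (hclosed : ∀ c : ℝ, IsClosed {x | f x ≤ c})
    (hbdd : BddBelow (Set.range f))
    (xstar : Fin n → ℝ) (hmin : ∀ y, f xstar ≤ f y)
    (x : Fin n → ℝ)
    (lam : ℝ) (hlam : lam = Real.sqrt (grad x ⬝ᵥ ((hess x)⁻¹ *ᵥ grad x)))
    (hlam1 : lam < 1) :
    lam - Real.log (1 + lam) ≤ f x - f xstar ∧
    f x - f xstar ≤ -lam - Real.log (1 - lam) ∧
    (lam ≤ 0.68 → f x - f xstar ≤ lam ^ 2) := by
  clear hconv hclosed hbdd
  set w := (hess x)⁻¹ *ᵥ grad x with hw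
  have hdet : IsUnit (hess x).det := (hhpd x).det_pos.ne'.isUnit
  have hHw : hess x *ᵥ w = grad x := by
    rw [hw, Matrix.mulVec_mulVec, Matrix.mul_nonsing_inv _ hdet, Matrix.one_mulVec]
  have hswap : ∀ a b : Fin n → ℝ, a ⬝ᵥ (hess x *ᵥ b) = b ⬝ᵥ (hess x *ᵥ a) := by
    intro a b
    rw [Matrix.dotProduct_mulVec, ← Matrix.mulVec_transpose,
      show (hess x)ᵀ = hess x from hhsymm x]
    exact dotProduct_comm _ _
  have hQnn : ∀ v : Fin n → ℝ, 0 ≤ v ⬝ᵥ (hess x *ᵥ v) := by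
    intro v
    by_cases hv : v = 0
    · simp [hv]
    · exact le_of_lt (pd_quad _ (hhpd x) v hv)
  have hgw : grad x ⬝ᵥ w = w ⬝ᵥ (hess x *ᵥ w) := by
    conv_lhs => rw [← hHw]
    exact dotProduct_comm _ _
  have hgwnn : 0 ≤ grad x ⬝ᵥ w := hgw ▸ hQnn w
  have hlam0 : 0 ≤ lam := hlam ▸ Real.sqrt_nonneg _
  have hp : lam ^ 2 = grad x ⬝ᵥ w := by rw [hlam, Real.sq_sqrt hgwnn]
  have hCS : ∀ u : Fin n → ℝ,
      (grad x ⬝ᵥ u) ^ 2 ≤ (grad x ⬝ᵥ w) * (u ⬝ᵥ (hess x *ᵥ u)) := by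
    intro u
    by_cases hw0 : w = 0
    · have hg0 : grad x = 0 := by rw [← hHw, hw0, Matrix.mulVec_zero]
      simp [hg0, zero_dotProduct]
    · have hp0 : 0 < grad x ⬝ᵥ w := by rw [hgw]; exact pd_quad _ (hhpd x) w hw0
      have e1 : u ⬝ᵥ (hess x *ᵥ w) = grad x ⬝ᵥ u := by
        rw [hHw]; exact dotProduct_comm _ _
      have e2 : w ⬝ᵥ (hess x *ᵥ u) = grad x ⬝ᵥ u := by rw [hswap w u, e1]
      have e3 : w ⬝ᵥ (hess x *ᵥ w) = grad x ⬝ᵥ w := hgw.symm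
      have hexp : ((grad x ⬝ᵥ w) • u - (grad x ⬝ᵥ u) • w) ⬝ᵥ
          (hess x *ᵥ ((grad x ⬝ᵥ w) • u - (grad x ⬝ᵥ u) • w)) =
          (grad x ⬝ᵥ w) * ((grad x ⬝ᵥ w) * (u ⬝ᵥ (hess x *ᵥ u)) - (grad x ⬝ᵥ u) ^ 2) := by
        rw [Matrix.mulVec_sub, Matrix.mulVec_smul, Matrix.mulVec_smul]
        simp only [sub_dotProduct, smul_dotProduct, dotProduct_sub,
          dotProduct_smul, smul_eq_mul, e1, e2, e3]
        ring
      have h0 := hQnn ((grad x ⬝ᵥ w) • u - (grad x ⬝ᵥ u) • w)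
      rw [hexp] at h0
      nlinarith [hp0, h0]
  -- upper bound
  have key2 : f x - f xstar ≤ -lam - Real.log (1 - lam) := by
    have hlog := Real.log_le_sub_one_of_pos (show (0:ℝ) < 1 - lam by linarith)
    by_cases hu0 : xstar - x = 0
    · have hxx : xstar = x := by rwa [sub_eq_zero] at hu0
      rw [hxx]
      linarith
    · set φ := fun t : ℝ => f (x + t • (xstar - x)) with hφdef
      have hφc : ContDiff ℝ 3 φ := line_contDiff f hf x (xstar - x)
      have hL2 := line_second f hess hhessq x (xstar - x)
      have hpos2 : ∀ t, 0 < iteratedDeriv 2 φ t := fun t => by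
        rw [hφdef, hL2 t]; exact pd_quad _ (hhpd _) _ hu0
      obtain ⟨hA, -⟩ := sc_one_dim φ hφc hpos2 (hsc x (xstar - x))
      set c := Real.sqrt (iteratedDeriv 2 φ 0) with hcdef
      have hc0 : 0 ≤ c := Real.sqrt_nonneg _
      have h20 : iteratedDeriv 2 φ 0 = (xstar - x) ⬝ᵥ (hess x *ᵥ (xstar - x)) := by
        rw [hφdef, hL2 0]
        norm_num
      have hc2 : c ^ 2 = (xstar - x) ⬝ᵥ (hess x *ᵥ (xstar - x)) := by
        rw [hcdef, Real.sq_sqrt (le_of_lt (hpos2 0)), h20]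
      have hder : deriv φ 0 = grad x ⬝ᵥ (xstar - x) := hgrad x (xstar - x)
      have hφ1 : φ 1 = f xstar := by simp [hφdef]
      have hφ0 : φ 0 = f x := by simp [hφdef]
      have hqlow : -(lam * c) ≤ grad x ⬝ᵥ (xstar - x) := by
        have hcs := hCS (xstar - x)
        rw [← hc2, ← hp] at hcs
        have h1 : (grad x ⬝ᵥ (xstar - x)) ^ 2 ≤ (lam * c) ^ 2 := by nlinarith [hcs]
        have habs : |grad x ⬝ᵥ (xstar - x)| ≤ lam * c := by
          calc |grad x ⬝ᵥ (xstar - x)| = Real.sqrt ((grad x ⬝ᵥ (xstar - x)) ^ 2) :=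
                (Real.sqrt_sq_eq_abs _).symm
          _ ≤ Real.sqrt ((lam * c) ^ 2) := Real.sqrt_le_sqrt h1
          _ = lam * c := Real.sqrt_sq (mul_nonneg hlam0 hc0)
        linarith [neg_abs_le (grad x ⬝ᵥ (xstar - x)), habs]
      have hy := young_ineq lam c hlam0 hlam1 hc0
      rw [hφ0, hφ1, hder] at hA
      linarith [hA, hqlow, hy]
  -- lower bound
  have key1 : lam - Real.log (1 + lam) ≤ f x - f xstar := by
    rcases eq_or_lt_of_le hlam0 with hl0 | hlpos
    · rw [← hl0]
      simp only [add_zero, Real.log_one]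
      linarith [hmin x]
    · have hw0 : w ≠ 0 := by
        intro h
        rw [h, dotProduct_zero] at hp
        nlinarith
      have ha0 : (-(1 + lam)⁻¹ : ℝ) ≠ 0 := by
        have h1 : (0:ℝ) < 1 + lam := by linarith
        simp only [ne_eq, neg_eq_zero, inv_eq_zero]
        linarith
      have hu0 : (-(1 + lam)⁻¹ : ℝ) • w ≠ 0 := smul_ne_zero ha0 hw0
      set u := (-(1 + lam)⁻¹ : ℝ) • w with hudef
      set φ := fun t : ℝ => f (x + t • u) with hφdef
      have hφc : ContDiff ℝ 3 φ := line_contDiff f hf x u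
      have hL2 := line_second f hess hhessq x u
      have hpos2 : ∀ t, 0 < iteratedDeriv 2 φ t := fun t => by
        rw [hφdef, hL2 t]; exact pd_quad _ (hhpd _) _ hu0
      obtain ⟨-, hB⟩ := sc_one_dim φ hφc hpos2 (hsc x u)
      have h20 : iteratedDeriv 2 φ 0 = u ⬝ᵥ (hess x *ᵥ u) := by
        rw [hφdef, hL2 0]
        norm_num
      have hq2 : u ⬝ᵥ (hess x *ᵥ u) = ((1 + lam)⁻¹) ^ 2 * lam ^ 2 := by
        rw [hudef, Matrix.mulVec_smul]
        simp only [smul_dotProduct, dotProduct_smul, smul_eq_mul]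
        rw [← hgw, ← hp]
        ring
      have hsqrt : Real.sqrt (iteratedDeriv 2 φ 0) = lam / (1 + lam) := by
        rw [h20, hq2, show ((1+lam)⁻¹)^2 * lam^2 = (lam * (1+lam)⁻¹)^2 by ring,
          Real.sqrt_sq (by positivity), div_eq_mul_inv]
      have hc1 : Real.sqrt (iteratedDeriv 2 φ 0) < 1 := by
        rw [hsqrt, div_lt_one (by linarith)]; linarith
      have hB2 := hB hc1
      rw [hsqrt] at hB2
      have hder : deriv φ 0 = -(1 + lam)⁻¹ * lam ^ 2 := by
        rw [hφdef]
        rw [hgrad x u, hudef]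
        simp only [dotProduct_smul, smul_eq_mul]
        rw [← hp]
      rw [hder] at hB2
      have hφ0 : φ 0 = f x := by simp [hφdef]
      rw [hφ0] at hB2
      have hmin2 : f xstar ≤ φ 1 := hmin _
      have hlogeq : Real.log (1 - lam / (1 + lam)) = -Real.log (1 + lam) := by
        rw [show 1 - lam/(1+lam) = ((1+lam))⁻¹ by field_simp; ring, Real.log_inv]
      rw [hlogeq] at hB2
      have harith : -(1 + lam)⁻¹ * lam ^ 2 + (-(lam / (1 + lam)) - -Real.log (1 + lam)) =
          -lam + Real.log (1 + lam) := by
        have h1 : (1:ℝ) + lam ≠ 0 := by linarith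
        field_simp
        ring
      linarith [hB2, hmin2, harith]
  refine ⟨key1, key2, fun h68 => ?_⟩
  -- numeric part
  have hnum : -lam - Real.log (1 - lam) ≤ lam ^ 2 := by
    have hh0 : (0:ℝ) + 0 ^ 2 + Real.log (1 - 0) = 0 := by norm_num
    have hder : ∀ l ∈ Set.Icc (0:ℝ) 0.68,
        HasDerivAt (fun l : ℝ => l + l ^ 2 + Real.log (1 - l)) (1 + 2 * l + (-1) / (1 - l)) l := by
      intro l hl
      have hne : (1:ℝ) - l ≠ 0 := by
        have h2 : l ≤ 0.68 := hl.2
        intro hcc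
        have h3 : l = 1 := by linarith
        rw [h3] at h2
        norm_num at h2
      have h1 : HasDerivAt (fun s : ℝ => 1 - s) (-1) l := by
        simpa using (hasDerivAt_id l).const_sub 1
      have hlog := h1.log hne
      have hsq : HasDerivAt (fun s : ℝ => s ^ 2) (2 * l) l := by
        simpa using hasDerivAt_pow 2 l
      have := ((hasDerivAt_id l).add hsq).add hlog
      exact this
    suffices hnn : 0 ≤ lam + lam ^ 2 + Real.log (1 - lam) by nlinarith [hnn]
    rcases le_or_gt lam (1/2) with hc | hc
    · have hmono : MonotoneOn (fun l : ℝ => l + l ^ 2 + Real.log (1 - l))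
          (Set.Icc (0:ℝ) (1/2)) := by
        apply monotoneOn_of_deriv_nonneg (convex_Icc _ _)
        · intro t ht
          exact (hder t ⟨ht.1, le_trans ht.2 (by norm_num)⟩).continuousAt.continuousWithinAt
        · intro t ht
          rw [interior_Icc] at ht
          exact (hder t ⟨le_of_lt ht.1, le_trans (le_of_lt ht.2) (by norm_num)⟩).differentiableAt.differentiableWithinAt
        · intro t ht
          rw [interior_Icc] at ht
          rw [(hder t ⟨le_of_lt ht.1, le_trans (le_of_lt ht.2) (by norm_num)⟩).deriv]
          have h1 : (0:ℝ) < 1 - t := by linarith [ht.2]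
          have h2 : (1:ℝ) / (1 - t) ≤ 1 + 2 * t := by
            rw [div_le_iff₀ h1]
            nlinarith [ht.1, ht.2]
          have h3 : (-1:ℝ) / (1 - t) = -(1 / (1 - t)) := by ring
          linarith
      have := hmono (Set.mem_Icc.mpr ⟨le_rfl, by norm_num⟩)
        (Set.mem_Icc.mpr ⟨hlam0, hc⟩) hlam0
      simpa [hh0] using this
    · have hanti : AntitoneOn (fun l : ℝ => l + l ^ 2 + Real.log (1 - l))
          (Set.Icc (1/2:ℝ) 0.68) := by
        apply antitoneOn_of_deriv_nonpos (convex_Icc _ _)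
        · intro t ht
          exact (hder t ⟨by linarith [ht.1], ht.2⟩).continuousAt.continuousWithinAt
        · intro t ht
          rw [interior_Icc] at ht
          exact (hder t ⟨by linarith [ht.1], le_of_lt ht.2⟩).differentiableAt.differentiableWithinAt
        · intro t ht
          rw [interior_Icc] at ht
          rw [(hder t ⟨by linarith [ht.1], le_of_lt ht.2⟩).deriv]
          have h1 : (0:ℝ) < 1 - t := by
            have := ht.2
            norm_num at this ⊢
            linarith
          have h2 : (1:ℝ) + 2 * t ≤ 1 / (1 - t) := by
            rw [le_div_iff₀ h1]
            nlinarith [ht.1]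
          have h3 : (-1:ℝ) / (1 - t) = -(1 / (1 - t)) := by ring
          linarith
      have h1 := hanti (Set.mem_Icc.mpr ⟨le_of_lt hc, h68⟩)
        (Set.mem_Icc.mpr ⟨by norm_num, le_rfl⟩) h68
      have h2 : (0.68:ℝ) + 0.68 ^ 2 + Real.log (1 - 0.68) ≤ lam + lam ^ 2 + Real.log (1 - lam) := h1
      linarith [h2, endpoint_log]
  linarith [key2, hnum]
end

section
/- Let f be a strictly convex standard self-concordant function on ℝⁿ, x a point, H := ∇²f(x), P an n×N matrix of full column rank, H_r := Pᵀ H P, and Q the coarse truncated approximation of H_r with parameter p. Let λ̂ := (∇f(x)ᵀ P Q⁻¹ Pᵀ ∇f(x))^{1/2} > 0, d̂ := −P Q⁻¹ Pᵀ ∇f(x), and t := 1/(1 + λ̂). Then f(x + t d̂) − f(x) ≤ −ω(λ̂) = −(λ̂ − log(1 + λ̂)). -/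
open Matrix


lemma myUtU {N : ℕ} (u : Fin N → Fin N → ℝ)
    (hortho : ∀ i j, u i ⬝ᵥ u j = if i = j then (1:ℝ) else 0) :
    (Matrix.of fun j i => u i j)ᵀ * (Matrix.of fun j i => u i j) = 1 := by
  ext i j
  simp [Matrix.mul_apply, Matrix.one_apply, ← hortho i j, dotProduct]

lemma myfact {N : ℕ} (A : Matrix (Fin N) (Fin N) ℝ) (u : Fin N → Fin N → ℝ)
    (d : Fin N → ℝ)
    (hortho : ∀ i j, u i ⬝ᵥ u j = if i = j then (1:ℝ) else 0)
    (heig : ∀ i, A *ᵥ u i = d i • u i) :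
    A = (Matrix.of fun j i => u i j) * Matrix.diagonal d * (Matrix.of fun j i => u i j)ᵀ := by
  set U : Matrix (Fin N) (Fin N) ℝ := Matrix.of fun j i => u i j with hUdef
  have hUtU : Uᵀ * U = 1 := myUtU u hortho
  have hUUt : U * Uᵀ = 1 := mul_eq_one_comm.mp hUtU
  have hAU : A * U = U * Matrix.diagonal d := by
    ext k i
    have := congrFun (heig i) k
    simp only [Matrix.mulVec, dotProduct, Pi.smul_apply, smul_eq_mul] at this
    simp [Matrix.mul_apply, hUdef, Matrix.diagonal, this, mul_comm]
  calc A = A * (U * Uᵀ) := by rw [hUUt, Matrix.mul_one]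
    _ = (A * U) * Uᵀ := by rw [Matrix.mul_assoc]
    _ = U * Matrix.diagonal d * Uᵀ := by rw [hAU]

lemma my_diag_quad {N : ℕ} (d c : Fin N → ℝ) :
    c ⬝ᵥ (Matrix.diagonal d *ᵥ c) = ∑ i, d i * c i ^ 2 := by
  simp [dotProduct, Matrix.mulVec_diagonal]
  exact Finset.sum_congr rfl fun i _ => by ring

lemma my_dot_shift {m k : ℕ} (A : Matrix (Fin m) (Fin k) ℝ) (v : Fin m → ℝ) (w : Fin k → ℝ) :
    v ⬝ᵥ (A *ᵥ w) = (Aᵀ *ᵥ v) ⬝ᵥ w := by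
  rw [Matrix.dotProduct_mulVec, ← Matrix.vecMul_transpose]
  rfl

lemma la_main {n N p : ℕ} (hpN : p < N)
    (H : Matrix (Fin n) (Fin n) ℝ) (g : Fin n → ℝ)
    (P : Matrix (Fin n) (Fin N) ℝ)
    (σ : Fin N → ℝ) (u : Fin N → Fin N → ℝ)
    (hσpos : ∀ i, 0 < σ i)
    (hσmono : ∀ i j : Fin N, i ≤ j → σ j ≤ σ i)
    (hortho : ∀ i j : Fin N, u i ⬝ᵥ u j = if i = j then (1 : ℝ) else 0)
    (hHreig : ∀ i, (Pᵀ * H * P) *ᵥ u i = σ i • u i)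
    (Q : Matrix (Fin N) (Fin N) ℝ)
    (hQeig : ∀ i : Fin N, Q *ᵥ u i = (if (i : ℕ) < p then σ i else σ ⟨p, hpN⟩) • u i) :
    0 ≤ g ⬝ᵥ (P *ᵥ (Q⁻¹ *ᵥ (Pᵀ *ᵥ g))) ∧
    (P *ᵥ (Q⁻¹ *ᵥ (Pᵀ *ᵥ g))) ⬝ᵥ (H *ᵥ (P *ᵥ (Q⁻¹ *ᵥ (Pᵀ *ᵥ g))))
      ≤ g ⬝ᵥ (P *ᵥ (Q⁻¹ *ᵥ (Pᵀ *ᵥ g))) ∧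
    (g ⬝ᵥ (P *ᵥ (Q⁻¹ *ᵥ (Pᵀ *ᵥ g))) = 0 → Q⁻¹ *ᵥ (Pᵀ *ᵥ g) = 0) := by
  set U : Matrix (Fin N) (Fin N) ℝ := Matrix.of fun j i => u i j with hUdef
  have hUtU : Uᵀ * U = 1 := myUtU u hortho
  have hUUt : U * Uᵀ = 1 := mul_eq_one_comm.mp hUtU
  set q : Fin N → ℝ := fun i => if (i : ℕ) < p then σ i else σ ⟨p, hpN⟩ with hqdef
  have hqpos : ∀ i, 0 < q i := fun i => by
    by_cases h : (i : ℕ) < p <;> simp [hqdef, h, hσpos]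
  have hσq : ∀ i, σ i ≤ q i := fun i => by
    by_cases h : (i : ℕ) < p
    · simp [hqdef, h]
    · simp only [hqdef, h, if_false]
      exact hσmono _ _ (by exact Fin.le_def.mpr (le_of_not_gt h))
  have hQfact : Q = U * Matrix.diagonal q * Uᵀ := myfact Q u q hortho hQeig
  have hHrfact : Pᵀ * H * P = U * Matrix.diagonal σ * Uᵀ := myfact _ u σ hortho hHreig
  have hQinv : Q⁻¹ = U * Matrix.diagonal (fun i => (q i)⁻¹) * Uᵀ := by
    apply Matrix.inv_eq_right_inv
    rw [hQfact]
    calc U * Matrix.diagonal q * Uᵀ * (U * Matrix.diagonal (fun i => (q i)⁻¹) * Uᵀ)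
        = U * Matrix.diagonal q * (Uᵀ * U) * Matrix.diagonal (fun i => (q i)⁻¹) * Uᵀ := by
          simp only [Matrix.mul_assoc]
      _ = U * (Matrix.diagonal q * Matrix.diagonal (fun i => (q i)⁻¹)) * Uᵀ := by
          rw [hUtU]; simp only [Matrix.mul_one, Matrix.mul_assoc]
      _ = 1 := by
          rw [Matrix.diagonal_mul_diagonal]
          have : (fun i => q i * (q i)⁻¹) = fun _ => (1:ℝ) := by
            funext i; exact mul_inv_cancel₀ (hqpos i).ne'
          rw [this, Matrix.diagonal_one, Matrix.mul_one, hUUt]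
  -- coefficients
  set b : Fin N → ℝ := Pᵀ *ᵥ g with hbdef
  set c : Fin N → ℝ := Uᵀ *ᵥ b with hcdef
  have hw : Q⁻¹ *ᵥ b = U *ᵥ (Matrix.diagonal (fun i => (q i)⁻¹) *ᵥ c) := by
    rw [hQinv, hcdef, ← Matrix.mulVec_mulVec, ← Matrix.mulVec_mulVec]
  have hUtw : Uᵀ *ᵥ (Q⁻¹ *ᵥ b) = Matrix.diagonal (fun i => (q i)⁻¹) *ᵥ c := by
    rw [hw, Matrix.mulVec_mulVec, hUtU, Matrix.one_mulVec]
  have hlam2 : g ⬝ᵥ (P *ᵥ (Q⁻¹ *ᵥ b)) = ∑ i, (q i)⁻¹ * c i ^ 2 := by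
    rw [my_dot_shift, ← hbdef, hw, my_dot_shift, ← hcdef, my_diag_quad]
  have hquadcomp : (P *ᵥ (Q⁻¹ *ᵥ b)) ⬝ᵥ (H *ᵥ (P *ᵥ (Q⁻¹ *ᵥ b)))
      = (Q⁻¹ *ᵥ b) ⬝ᵥ ((Pᵀ * H * P) *ᵥ (Q⁻¹ *ᵥ b)) := by
    rw [← Matrix.mulVec_mulVec, ← Matrix.mulVec_mulVec,
      my_dot_shift Pᵀ, Matrix.transpose_transpose]
  have hr2 : (P *ᵥ (Q⁻¹ *ᵥ b)) ⬝ᵥ (H *ᵥ (P *ᵥ (Q⁻¹ *ᵥ b)))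
      = ∑ i, σ i * ((q i)⁻¹ * c i) ^ 2 := by
    rw [hquadcomp, hHrfact]
    rw [show U * Matrix.diagonal σ * Uᵀ = U * (Matrix.diagonal σ * Uᵀ) from Matrix.mul_assoc _ _ _]
    rw [← Matrix.mulVec_mulVec, my_dot_shift U, hUtw, ← Matrix.mulVec_mulVec, hUtw,
      my_diag_quad]
    congr 1; funext i
    rw [Matrix.mulVec_diagonal]
  have key : ∀ i : Fin N, σ i * ((q i)⁻¹ * c i) ^ 2 ≤ (q i)⁻¹ * c i ^ 2 := by
    intro i
    have h1 : q i * (q i)⁻¹ = 1 := mul_inv_cancel₀ (hqpos i).ne'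
    have h2 : (0:ℝ) ≤ (q i)⁻¹ := inv_nonneg.mpr (hqpos i).le
    calc σ i * ((q i)⁻¹ * c i) ^ 2 ≤ q i * ((q i)⁻¹ * c i) ^ 2 :=
          mul_le_mul_of_nonneg_right (hσq i) (sq_nonneg _)
      _ = (q i * (q i)⁻¹) * ((q i)⁻¹ * c i ^ 2) := by ring
      _ = (q i)⁻¹ * c i ^ 2 := by rw [h1, one_mul]
  refine ⟨?_, ?_, ?_⟩
  · rw [hlam2]
    exact Finset.sum_nonneg fun i _ => mul_nonneg (inv_nonneg.mpr (hqpos i).le) (sq_nonneg _)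
  · rw [hlam2, hr2]
    exact Finset.sum_le_sum fun i _ => key i
  · intro h0
    rw [hlam2] at h0
    have hcz : ∀ i, c i = 0 := by
      intro i
      have := (Finset.sum_eq_zero_iff_of_nonneg (fun i _ =>
        mul_nonneg (inv_nonneg.mpr (hqpos i).le) (sq_nonneg (c i)))).mp h0 i (Finset.mem_univ i)
      have hq : (q i)⁻¹ ≠ 0 := inv_ne_zero (hqpos i).ne'
      have : c i ^ 2 = 0 := by
        rcases mul_eq_zero.mp this with h | h
        · exact absurd h hq
        · exact h
      exact pow_eq_zero_iff (by norm_num) |>.mp this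
    have : c = 0 := funext hcz
    rw [hw, this, Matrix.mulVec_zero, Matrix.mulVec_zero]

/-- Comparison: if `a 0 ≤ b 0` and `a' ≤ b'` on `[0,T]`, then `a T ≤ b T`. -/
lemma my_comp_le {a b a' b' : ℝ → ℝ} {T : ℝ} (hT : 0 ≤ T)
    (ha : ∀ t ∈ Set.Icc 0 T, HasDerivAt a (a' t) t)
    (hb : ∀ t ∈ Set.Icc 0 T, HasDerivAt b (b' t) t)
    (hab : a 0 ≤ b 0) (h' : ∀ t ∈ Set.Icc 0 T, a' t ≤ b' t) : a T ≤ b T := by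
  have hmono : MonotoneOn (fun t => b t - a t) (Set.Icc 0 T) := by
    apply monotoneOn_of_deriv_nonneg (convex_Icc 0 T)
    · exact fun t ht => ((hb t ht).sub (ha t ht)).continuousAt.continuousWithinAt
    · intro t ht
      rw [interior_Icc] at ht
      exact (((hb t (Set.mem_Icc_of_Ioo ht)).sub (ha t (Set.mem_Icc_of_Ioo ht)))).differentiableAt.differentiableWithinAt
    · intro t ht
      rw [interior_Icc] at ht
      have := ((hb t (Set.mem_Icc_of_Ioo ht)).sub (ha t (Set.mem_Icc_of_Ioo ht))).deriv
      rw [show (fun t => b t - a t) = b - a from rfl, this]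
      exact sub_nonneg.mpr (h' t (Set.mem_Icc_of_Ioo ht))
  have h0 : (0:ℝ) ∈ Set.Icc 0 T := Set.mem_Icc.mpr ⟨le_refl 0, hT⟩
  have hTm : T ∈ Set.Icc 0 T := Set.mem_Icc.mpr ⟨hT, le_refl T⟩
  have := hmono h0 hTm hT
  simp only [] at this
  linarith [this, hab]

/-- Monotonicity of `s ↦ -s - log (1-s)` on `[0,1)`. -/
lemma my_omega_mono {s1 s2 : ℝ} (h0 : 0 ≤ s1) (h12 : s1 ≤ s2) (h2 : s2 < 1) :
    -s1 - Real.log (1 - s1) ≤ -s2 - Real.log (1 - s2) := by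
  have hm1 : 0 < 1 - s1 := by linarith
  have hm2 : 0 < 1 - s2 := by linarith
  have hy : (0:ℝ) < (1 - s2) / (1 - s1) := div_pos hm2 hm1
  have hlog : Real.log ((1 - s2) / (1 - s1)) ≤ (1 - s2) / (1 - s1) - 1 :=
    Real.log_le_sub_one_of_pos hy
  rw [Real.log_div hm2.ne' hm1.ne'] at hlog
  have hdiv : (1 - s2) / (1 - s1) - 1 = (s1 - s2) / (1 - s1) := by
    field_simp
    ring
  rw [hdiv] at hlog
  have hle : (s1 - s2) / (1 - s1) ≤ s1 - s2 := by
    rw [div_le_iff₀ hm1]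
    nlinarith
  linarith

/-- Key self-concordance bound along a line. -/
lemma my_sc_bound (φ : ℝ → ℝ) (hφ : ContDiff ℝ 3 φ)
    (hψpos : ∀ t : ℝ, 0 < iteratedDeriv 2 φ t)
    (hsc : ∀ t : ℝ, |iteratedDeriv 3 φ t| ≤ 2 * iteratedDeriv 2 φ t ^ ((3:ℝ)/2))
    {r T : ℝ} (hr : r = Real.sqrt (iteratedDeriv 2 φ 0))
    (hT : 0 ≤ T) (hTr : T * r < 1) :
    φ T ≤ φ 0 + deriv φ 0 * T - r * T - Real.log (1 - T * r) := by
  set ψ := iteratedDeriv 2 φ with hψdef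
  have hrpos : 0 < r := hr ▸ Real.sqrt_pos.mpr (hψpos 0)
  have hψdiff : Differentiable ℝ ψ := hφ.differentiable_iteratedDeriv 2 (by norm_num)
  have hψderiv : ∀ t, HasDerivAt ψ (iteratedDeriv 3 φ t) t := by
    intro t
    have h1 : deriv ψ t = iteratedDeriv 3 φ t := by
      rw [hψdef, ← iteratedDeriv_succ]
    exact h1 ▸ (hψdiff t).hasDerivAt
  -- h := (sqrt ψ)⁻¹
  set h : ℝ → ℝ := fun t => (Real.sqrt (ψ t))⁻¹ with hhdef
  have hsq : ∀ t, 0 < Real.sqrt (ψ t) := fun t => Real.sqrt_pos.mpr (hψpos t)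
  have hhd : ∀ t, HasDerivAt h
      (-(1 / (2 * Real.sqrt (ψ t)) * iteratedDeriv 3 φ t) / (Real.sqrt (ψ t))^2) t := by
    intro t
    exact (((Real.hasDerivAt_sqrt (hψpos t).ne').comp t (hψderiv t))).inv (hsq t).ne'
  -- h + id is monotone
  have hmono : Monotone (fun t => h t + t) := by
    apply monotone_of_deriv_nonneg
    · exact fun t => ((hhd t).add (hasDerivAt_id t)).differentiableAt
    · intro t
      have hda : HasDerivAt (fun t => h t + t)
          (-(1 / (2 * Real.sqrt (ψ t)) * iteratedDeriv 3 φ t) / (Real.sqrt (ψ t))^2 + 1) t :=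
        (hhd t).add (hasDerivAt_id t)
      rw [hda.deriv]
      set s := Real.sqrt (ψ t) with hsdef
      have hs : 0 < s := hsq t
      set D := iteratedDeriv 3 φ t with hDdef
      have hbound : D ≤ 2 * s^3 := by
        have h32 : (ψ t) ^ ((3:ℝ)/2) = s^3 := by
          rw [hsdef, Real.sqrt_eq_rpow, ← Real.rpow_natCast ((ψ t) ^ ((1:ℝ)/2)) 3,
            ← Real.rpow_mul (hψpos t).le]
          norm_num
        calc D ≤ |D| := le_abs_self _
          _ ≤ 2 * (ψ t) ^ ((3:ℝ)/2) := hsc t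
          _ = 2 * s^3 := by rw [h32]
      have heq : -(1 / (2*s) * D)/s^2 + 1 = (2*s^3 - D)/(2*s^3) := by
        field_simp; ring
      rw [heq]
      apply div_nonneg (by linarith) (by positivity)
  -- inverse-square bound on psi
  have hTrinv : T < r⁻¹ := by
    have := mul_lt_mul_of_pos_right hTr (inv_pos.mpr hrpos)
    rwa [one_mul, mul_assoc, mul_inv_cancel₀ hrpos.ne', mul_one] at this
  have hh0 : h 0 = r⁻¹ := by rw [hhdef]; simp [hr]
  have hwpos : ∀ t ∈ Set.Icc (0:ℝ) T, 0 < r⁻¹ - t := by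
    intro t ht
    have := ht.2
    linarith
  have hψle : ∀ t ∈ Set.Icc (0:ℝ) T, ψ t ≤ ((r⁻¹ - t)⁻¹)^2 := by
    intro t ht
    have hmt := hmono (show (0:ℝ) ≤ t from ht.1)
    simp only [add_zero] at hmt
    have hht : r⁻¹ - t ≤ h t := by rw [← hh0]; linarith
    have hsle : Real.sqrt (ψ t) ≤ (r⁻¹ - t)⁻¹ := by
      have h1 : (h t)⁻¹ ≤ (r⁻¹ - t)⁻¹ :=
        inv_anti₀ (hwpos t ht) hht
      rwa [hhdef, inv_inv] at h1
    calc ψ t = (Real.sqrt (ψ t))^2 := (Real.sq_sqrt (hψpos t).le).symm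
      _ ≤ ((r⁻¹ - t)⁻¹)^2 := pow_le_pow_left₀ (hsq t).le hsle 2
  -- derivative facts
  have hd1 : Differentiable ℝ (deriv φ) := by
    have := hφ.differentiable_iteratedDeriv 1 (by norm_num)
    rwa [iteratedDeriv_one] at this
  have hd1' : ∀ t, HasDerivAt (deriv φ) (ψ t) t := by
    intro t
    have : deriv (deriv φ) t = ψ t := by
      rw [hψdef, iteratedDeriv_succ, iteratedDeriv_one]
    exact this ▸ (hd1 t).hasDerivAt
  have hwd : ∀ t : ℝ, HasDerivAt (fun s => r⁻¹ - s) (-1) t := by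
    intro t
    simpa using (hasDerivAt_id t).const_sub r⁻¹
  -- first comparison: deriv φ t ≤ deriv φ 0 + ((r⁻¹-t)⁻¹ - r)
  have hphi' : ∀ t0 ∈ Set.Icc (0:ℝ) T, deriv φ t0 ≤ deriv φ 0 + ((r⁻¹ - t0)⁻¹ - r) := by
    intro t0 ht0
    have hsub : Set.Icc (0:ℝ) t0 ⊆ Set.Icc 0 T := Set.Icc_subset_Icc le_rfl ht0.2
    apply my_comp_le (a' := ψ) (b' := fun t => ((r⁻¹ - t)⁻¹)^2) ht0.1
    · exact fun t ht => hd1' t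
    · intro t ht
      have hw := hwpos t (hsub ht)
      have : HasDerivAt (fun s => deriv φ 0 + ((r⁻¹ - s)⁻¹ - r))
          (0 + (-(-1) / (r⁻¹ - t)^2 - 0)) t :=
        (hasDerivAt_const t _).add (((hwd t).inv hw.ne').sub (hasDerivAt_const t r))
      convert this using 1
      field_simp
      ring
    · simp
    · exact fun t ht => hψle t (hsub ht)
  -- second comparison: φ
  have hphi : φ T ≤ φ 0 + deriv φ 0 * T + (-Real.log (r⁻¹ - T) + Real.log r⁻¹ - r * T) := by
    apply my_comp_le (a' := deriv φ) (b' := fun t => deriv φ 0 + ((r⁻¹ - t)⁻¹ - r)) hT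
    · intro t ht
      exact ((hφ.differentiable (by norm_num)) t).hasDerivAt
    · intro t ht
      have hw := hwpos t ht
      have hlog : HasDerivAt (fun s => Real.log (r⁻¹ - s)) ((r⁻¹ - t)⁻¹ * (-1)) t := by
        have := (Real.hasDerivAt_log hw.ne').comp t (hwd t)
        simpa [one_div, Function.comp_def] using this
      have : HasDerivAt (fun s => φ 0 + deriv φ 0 * s + (-Real.log (r⁻¹ - s) + Real.log r⁻¹ - r * s))
          (0 + deriv φ 0 * 1 + (-((r⁻¹ - t)⁻¹ * (-1)) + 0 - r * 1)) t := by
        exact ((hasDerivAt_const t _).add ((hasDerivAt_id t).const_mul (deriv φ 0))).add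
          ((hlog.neg.add (hasDerivAt_const t _)).sub ((hasDerivAt_id t).const_mul r))
      convert this using 1
      ring
    · simp
    · exact hphi'
  -- rewrite the log terms
  have hlogeq : -Real.log (r⁻¹ - T) + Real.log r⁻¹ = -Real.log (1 - T * r) := by
    have h1 : r⁻¹ - T = (1 - T * r) * r⁻¹ := by
      have hrr : r * r⁻¹ = 1 := mul_inv_cancel₀ hrpos.ne'
      linear_combination T * hrr
    rw [h1, Real.log_mul (by linarith) (inv_pos.mpr hrpos).ne']
    ring
  calc φ T ≤ φ 0 + deriv φ 0 * T + (-Real.log (r⁻¹ - T) + Real.log r⁻¹ - r * T) := hphi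
    _ = φ 0 + deriv φ 0 * T - r * T - Real.log (1 - T * r) := by linarith [hlogeq]

lemma my_final_num (lam r : ℝ) (hlam : 0 < lam) (hr0 : 0 ≤ r) (hrlam : r ≤ lam) :
    (-(lam^2)) * (1/(1+lam)) - r * (1/(1+lam)) - Real.log (1 - (1/(1+lam)) * r)
      ≤ -(lam - Real.log (1 + lam)) := by
  have h1lam : 0 < 1 + lam := by linarith
  set T : ℝ := 1/(1+lam) with hTdef
  have hTpos : 0 < T := by positivity
  have hs1 : 0 ≤ T * r := mul_nonneg hTpos.le hr0
  have hs12 : T * r ≤ T * lam := mul_le_mul_of_nonneg_left hrlam hTpos.le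
  have hs2lt : T * lam < 1 := by
    rw [hTdef]
    rw [div_mul_eq_mul_div, div_lt_one h1lam]
    linarith
  have hmono := my_omega_mono hs1 hs12 hs2lt
  have h2 : 1 - T * lam = 1/(1+lam) := by
    rw [hTdef]; field_simp; ring
  have hlog2 : Real.log (1 - T * lam) = -Real.log (1+lam) := by
    rw [h2, one_div, Real.log_inv]
  have h3 : (-(lam^2)) * T - lam * T = -lam := by
    rw [hTdef]; field_simp; ring
  have hcomm : (1/(1+lam)) * r = T * r := by rw [hTdef]
  calc (-(lam^2)) * T - r * T - Real.log (1 - (1/(1+lam)) * r)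
      = (-(lam^2)) * T + (-(T*r) - Real.log (1 - T*r)) := by rw [hcomm]; ring
    _ ≤ (-(lam^2)) * T + (-(T*lam) - Real.log (1 - T*lam)) := by linarith [hmono]
    _ = ((-(lam^2)) * T - lam * T) - Real.log (1 - T*lam) := by ring
    _ = -lam + Real.log (1+lam) := by rw [h3, hlog2]; ring
    _ ≤ -(lam - Real.log (1 + lam)) := by linarith

/-- Let `f` be strictly convex standard self-concordant, `x`
a point, `H := ∇²f(x)`, `P` an `n×N` matrix of full column rank,
`H_r := Pᵀ H P`, `Q` the coarse truncated approximation of `H_r` with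
parameter `p`, `λ̂ = (∇f(x)ᵀ P Q⁻¹ Pᵀ ∇f(x))^{1/2} > 0`,
`d̂ = −P Q⁻¹ Pᵀ ∇f(x)` and `t := 1/(1 + λ̂)`.  Then
`f(x + t d̂) − f(x) ≤ −ω(λ̂) = −(λ̂ − log(1 + λ̂))`. -/
theorem stmt16 {n N p : ℕ} (hp : 1 ≤ p) (hpN : p < N) (hNn : N < n)
    (f : (Fin n → ℝ) → ℝ) (grad : (Fin n → ℝ) → Fin n → ℝ)
    (hess : (Fin n → ℝ) → Matrix (Fin n) (Fin n) ℝ)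
    (hf : ContDiff ℝ 3 f)
    (hconv : StrictConvexOn ℝ Set.univ f)
    (hgrad : ∀ x u : Fin n → ℝ, deriv (fun t : ℝ => f (x + t • u)) 0 = grad x ⬝ᵥ u)
    (hhessq : ∀ x u : Fin n → ℝ,
      iteratedDeriv 2 (fun t : ℝ => f (x + t • u)) 0 = u ⬝ᵥ (hess x *ᵥ u))
    (hhsymm : ∀ x, (hess x).IsSymm)
    (hhpd : ∀ x, (hess x).PosDef)
    (hsc : ∀ x u : Fin n → ℝ, ∀ t : ℝ,
      |iteratedDeriv 3 (fun s : ℝ => f (x + s • u)) t|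
        ≤ 2 * iteratedDeriv 2 (fun s : ℝ => f (x + s • u)) t ^ ((3 : ℝ) / 2))
    (hclosed : ∀ c : ℝ, IsClosed {x | f x ≤ c})
    (hbdd : BddBelow (Set.range f))
    (x : Fin n → ℝ)
    (P : Matrix (Fin n) (Fin N) ℝ) (hP : P.rank = N)
    (σ : Fin N → ℝ) (u : Fin N → Fin N → ℝ)
    (hσpos : ∀ i, 0 < σ i)
    (hσmono : ∀ i j : Fin N, i ≤ j → σ j ≤ σ i)
    (hortho : ∀ i j : Fin N, u i ⬝ᵥ u j = if i = j then (1 : ℝ) else 0)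
    (hHreig : ∀ i, (Pᵀ * hess x * P) *ᵥ u i = σ i • u i)
    (Q : Matrix (Fin N) (Fin N) ℝ) (hQsymm : Q.IsSymm)
    (hQeig : ∀ i : Fin N, Q *ᵥ u i = (if (i : ℕ) < p then σ i else σ ⟨p, hpN⟩) • u i)
    (lamhat : ℝ)
    (hlamhat : lamhat = Real.sqrt (grad x ⬝ᵥ (P *ᵥ (Q⁻¹ *ᵥ (Pᵀ *ᵥ grad x)))))
    (hlamhatpos : 0 < lamhat) :
    f (x + (1 / (1 + lamhat)) • -(P *ᵥ (Q⁻¹ *ᵥ (Pᵀ *ᵥ grad x)))) - f x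
      ≤ -(lamhat - Real.log (1 + lamhat)) := by
  obtain ⟨hlam2nn, hr2le, -⟩ := la_main hpN (hess x) (grad x) P σ u hσpos hσmono hortho hHreig Q hQeig
  set g : Fin n → ℝ := grad x with hgdef
  set v : Fin n → ℝ := P *ᵥ (Q⁻¹ *ᵥ (Pᵀ *ᵥ g)) with hvdef
  set lam2 : ℝ := g ⬝ᵥ v with hlam2def
  set d : Fin n → ℝ := -v with hddef
  have hlam2pos : 0 < lam2 := Real.sqrt_pos.mp (hlamhat ▸ hlamhatpos)
  have hlamsq : lamhat ^ 2 = lam2 := by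
    rw [hlamhat, Real.sq_sqrt hlam2nn]
  have hdne : d ≠ 0 := by
    intro h0
    have hv0 : v = 0 := by
      have := congrArg Neg.neg h0
      simpa [hddef] using this
    rw [hlam2def, hv0, dotProduct_zero] at hlam2pos
    exact lt_irrefl 0 hlam2pos
  set φ : ℝ → ℝ := fun t : ℝ => f (x + t • d) with hφdef
  have hφ3 : ContDiff ℝ 3 φ :=
    hf.comp (contDiff_const.add (contDiff_id.smul contDiff_const))
  have hshift : ∀ (k : ℕ) (t : ℝ), iteratedDeriv k φ t
      = iteratedDeriv k (fun s : ℝ => f ((x + t • d) + s • d)) 0 := by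
    intro k t
    have h1 : (fun s : ℝ => f ((x + t • d) + s • d)) = fun s => φ (t + s) := by
      funext s
      simp only [hφdef]
      congr 1
      rw [add_smul, add_assoc]
    rw [h1, congrFun (iteratedDeriv_comp_const_add k φ t) 0, add_zero]
  have hψeq : ∀ t : ℝ, iteratedDeriv 2 φ t = d ⬝ᵥ (hess (x + t • d) *ᵥ d) := by
    intro t
    rw [hshift 2 t, hhessq (x + t • d) d]
  have hψpos : ∀ t : ℝ, 0 < iteratedDeriv 2 φ t := by
    intro t
    rw [hψeq t]
    have := (hhpd (x + t • d)).dotProduct_mulVec_pos hdne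
    simpa using this
  have hφsc : ∀ t : ℝ, |iteratedDeriv 3 φ t| ≤ 2 * iteratedDeriv 2 φ t ^ ((3:ℝ)/2) :=
    fun t => hsc x d t
  -- value of psi at 0 and r
  have hψ0 : iteratedDeriv 2 φ 0 = v ⬝ᵥ (hess x *ᵥ v) := by
    have := hhessq x d
    rw [show (fun t : ℝ => f (x + t • d)) = φ from rfl] at this
    rw [this, hddef, Matrix.mulVec_neg, dotProduct_neg, neg_dotProduct, neg_neg]
  set r : ℝ := Real.sqrt (iteratedDeriv 2 φ 0) with hrdef
  have hr0 : 0 < r := Real.sqrt_pos.mpr (hψpos 0)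
  have hrlam : r ≤ lamhat := by
    rw [hrdef, hψ0]
    calc Real.sqrt (v ⬝ᵥ (hess x *ᵥ v)) ≤ Real.sqrt lam2 := Real.sqrt_le_sqrt hr2le
      _ = lamhat := by rw [← hlamsq, Real.sqrt_sq hlamhatpos.le]
  -- time step
  have h1lam : 0 < 1 + lamhat := by linarith
  set T : ℝ := 1 / (1 + lamhat) with hTdef
  have hTpos : 0 < T := by positivity
  have hTr : T * r < 1 := by
    have h2 : T * r ≤ T * lamhat := mul_le_mul_of_nonneg_left hrlam hTpos.le
    have h3 : T * lamhat < 1 := by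
      rw [hTdef, div_mul_eq_mul_div, div_lt_one h1lam]
      linarith
    linarith
  have hbound := my_sc_bound φ hφ3 hψpos hφsc hrdef hTpos.le hTr
  -- derivative at 0
  have hd0 : deriv φ 0 = -lam2 := by
    have := hgrad x d
    rw [show (fun t : ℝ => f (x + t • d)) = φ from rfl] at this
    rw [this, hddef, dotProduct_neg]
  have hφ0 : φ 0 = f x := by
    simp [hφdef]
  have hφT : φ T = f (x + (1 / (1 + lamhat)) • -(P *ᵥ (Q⁻¹ *ᵥ (Pᵀ *ᵥ grad x)))) := by
    rw [hφdef]
  have hfinal := my_final_num lamhat r hlamhatpos hr0.le hrlam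
  rw [← hφT, ← hφ0]
  have hTr' : (1 / (1 + lamhat)) * r = T * r := by rw [hTdef]
  calc φ T - φ 0 ≤ deriv φ 0 * T - r * T - Real.log (1 - T * r) := by linarith [hbound]
    _ = (-(lamhat^2)) * (1/(1+lamhat)) - r * (1/(1+lamhat))
          - Real.log (1 - (1/(1+lamhat)) * r) := by
        rw [hd0, ← hlamsq, hTr', hTdef]
    _ ≤ -(lamhat - Real.log (1 + lamhat)) := hfinal
end

section
/- Let f : ℝⁿ → ℝ be twice continuously differentiable with m I ⪯ ∇²f(y) ⪯ M I for all y, where 0 < m ≤ M. Fix x, let H := ∇²f(x), P an n×N matrix of full column rank, H_r := Pᵀ H P, and Q the coarse truncated approximation of H_r with parameter p. Let λ̂ := (∇f(x)ᵀ P Q⁻¹ Pᵀ ∇f(x))^{1/2} and d̂ := −P Q⁻¹ Pᵀ ∇f(x). Then with step size t := m/M one has f(x + t d̂) − f(x) ≤ −(m/(2M)) λ̂². -/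
open Matrix

/-- Let `f : ℝⁿ → ℝ` be twice continuously differentiable
with `m I ⪯ ∇²f(y) ⪯ M I` for all `y`, `0 < m ≤ M`.  Fix `x`, let
`H := ∇²f(x)`, `P` an `n×N` matrix of full column rank, `H_r := Pᵀ H P`, `Q`
the coarse truncated approximation of `H_r` with parameter `p`,
`λ̂ = (∇f(x)ᵀ P Q⁻¹ Pᵀ ∇f(x))^{1/2}` and `d̂ = −P Q⁻¹ Pᵀ ∇f(x)`.  Then with
step size `t := m/M` one has `f(x + t d̂) − f(x) ≤ −(m/(2M)) λ̂²`. -/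
theorem stmt18 {n N p : ℕ} (hp : 1 ≤ p) (hpN : p < N) (hNn : N < n)
    (f : (Fin n → ℝ) → ℝ) (grad : (Fin n → ℝ) → Fin n → ℝ)
    (hess : (Fin n → ℝ) → Matrix (Fin n) (Fin n) ℝ)
    (hf : ContDiff ℝ 2 f)
    (hgrad : ∀ x u : Fin n → ℝ, deriv (fun t : ℝ => f (x + t • u)) 0 = grad x ⬝ᵥ u)
    (hhessq : ∀ x u : Fin n → ℝ,
      iteratedDeriv 2 (fun t : ℝ => f (x + t • u)) 0 = u ⬝ᵥ (hess x *ᵥ u))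
    (hhsymm : ∀ x, (hess x).IsSymm)
    (m M : ℝ) (hm : 0 < m) (hmM : m ≤ M)
    (hlower : ∀ y, (hess y - m • (1 : Matrix (Fin n) (Fin n) ℝ)).PosSemidef)
    (hupper : ∀ y, (M • (1 : Matrix (Fin n) (Fin n) ℝ) - hess y).PosSemidef)
    (x : Fin n → ℝ)
    (P : Matrix (Fin n) (Fin N) ℝ) (hP : P.rank = N)
    (σ : Fin N → ℝ) (u : Fin N → Fin N → ℝ)
    (hσpos : ∀ i, 0 < σ i)
    (hσmono : ∀ i j : Fin N, i ≤ j → σ j ≤ σ i)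
    (hortho : ∀ i j : Fin N, u i ⬝ᵥ u j = if i = j then (1 : ℝ) else 0)
    (hHreig : ∀ i, (Pᵀ * hess x * P) *ᵥ u i = σ i • u i)
    (Q : Matrix (Fin N) (Fin N) ℝ) (hQsymm : Q.IsSymm)
    (hQeig : ∀ i : Fin N, Q *ᵥ u i = (if (i : ℕ) < p then σ i else σ ⟨p, hpN⟩) • u i)
    (lamhat : ℝ)
    (hlamhat : lamhat = Real.sqrt (grad x ⬝ᵥ (P *ᵥ (Q⁻¹ *ᵥ (Pᵀ *ᵥ grad x))))) :
    f (x + (m / M) • -(P *ᵥ (Q⁻¹ *ᵥ (Pᵀ *ᵥ grad x)))) - f x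
      ≤ -(m / (2 * M)) * lamhat ^ 2 := by
  have hM : (0 : ℝ) < M := hm.trans_le hmM
  set g : Fin n → ℝ := grad x with hgdef
  set w : Fin N → ℝ := Pᵀ *ᵥ g with hwdef
  set v : Fin N → ℝ := Q⁻¹ *ᵥ w with hvdef
  set d : Fin n → ℝ := P *ᵥ v with hddef
  -- orthogonal matrix U with rows u i
  set U : Matrix (Fin N) (Fin N) ℝ := Matrix.of u with hUdef
  have hUUt : U * Uᵀ = 1 := by
    ext i j
    simpa [hUdef, Matrix.mul_apply, Matrix.one_apply, dotProduct] using hortho i j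
  have hUtU : Uᵀ * U = 1 := mul_eq_one_comm.mp hUUt
  set e : Fin N → ℝ := fun i => if (i : ℕ) < p then σ i else σ ⟨p, hpN⟩ with hedef
  have hepos : ∀ i, 0 < e i := by
    intro i; by_cases h : (i : ℕ) < p <;> simp [hedef, h, hσpos]
  have heσ : ∀ i, σ i ≤ e i := by
    intro i
    by_cases h : (i : ℕ) < p
    · simp [hedef, h]
    · simp only [hedef, h, if_false]
      exact hσmono ⟨p, hpN⟩ i (Fin.le_def.mpr (not_lt.mp h))
  -- diagonalisations
  have hdiagfact : ∀ (A : Matrix (Fin N) (Fin N) ℝ) (c : Fin N → ℝ),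
      (∀ i, A *ᵥ u i = c i • u i) → A = Uᵀ * Matrix.diagonal c * U := by
    intro A c hA
    have hAU : A * Uᵀ = Uᵀ * Matrix.diagonal c := by
      ext i j
      have h1 : (A *ᵥ u j) i = c j * u j i := by rw [hA j]; rfl
      have h2 : (A * Uᵀ) i j = (A *ᵥ u j) i := by
        simp [hUdef, Matrix.mul_apply, Matrix.mulVec, dotProduct]
      have h3 : (Uᵀ * Matrix.diagonal c) i j = c j * u j i := by
        simp [hUdef, Matrix.mul_diagonal, mul_comm]
      rw [h2, h3, h1]
    calc A = A * (Uᵀ * U) := by rw [hUtU, Matrix.mul_one]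
      _ = (A * Uᵀ) * U := by rw [Matrix.mul_assoc]
      _ = Uᵀ * Matrix.diagonal c * U := by rw [hAU]
  have hQfact : Q = Uᵀ * Matrix.diagonal e * U := hdiagfact Q e hQeig
  have hHrfact : Pᵀ * hess x * P = Uᵀ * Matrix.diagonal σ * U := hdiagfact _ σ hHreig
  -- inverse of Q
  have hQR : Q * (Uᵀ * Matrix.diagonal (fun i => (e i)⁻¹) * U) = 1 := by
    rw [hQfact]
    have hDD : Matrix.diagonal e * Matrix.diagonal (fun i => (e i)⁻¹)
        = (1 : Matrix (Fin N) (Fin N) ℝ) := by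
      rw [Matrix.diagonal_mul_diagonal,
        show (fun i => e i * (e i)⁻¹) = fun _ => (1 : ℝ) from
          funext fun i => mul_inv_cancel₀ (hepos i).ne', Matrix.diagonal_one]
    calc (Uᵀ * Matrix.diagonal e * U) * (Uᵀ * Matrix.diagonal (fun i => (e i)⁻¹) * U)
        = Uᵀ * Matrix.diagonal e * (U * Uᵀ) * Matrix.diagonal (fun i => (e i)⁻¹) * U := by
          simp only [Matrix.mul_assoc]
      _ = Uᵀ * (Matrix.diagonal e * Matrix.diagonal (fun i => (e i)⁻¹)) * U := by
          rw [hUUt]; simp only [Matrix.mul_one, Matrix.mul_assoc]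
      _ = 1 := by rw [hDD, Matrix.mul_one, hUtU]
  have hQQinv : Q * Q⁻¹ = 1 := by rw [Matrix.inv_eq_right_inv hQR]; exact hQR
  have hQv : Q *ᵥ v = w := by
    rw [hvdef, Matrix.mulVec_mulVec, hQQinv, Matrix.one_mulVec]
  -- quadratic form via U-coordinates
  have quad : ∀ (c : Fin N → ℝ) (z : Fin N → ℝ),
      z ⬝ᵥ ((Uᵀ * Matrix.diagonal c * U) *ᵥ z) = ∑ i, c i * ((U *ᵥ z) i) ^ 2 := by
    intro c z
    rw [Matrix.mul_assoc, ← Matrix.mulVec_mulVec, Matrix.dotProduct_mulVec,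
      Matrix.vecMul_transpose, ← Matrix.mulVec_mulVec]
    simp only [dotProduct, Matrix.mulVec_diagonal]
    exact Finset.sum_congr rfl fun i _ => by ring
  -- key scalar quantities
  have hsval : g ⬝ᵥ d = v ⬝ᵥ (Q *ᵥ v) := by
    rw [hddef, Matrix.dotProduct_mulVec, ← Matrix.mulVec_transpose, ← hwdef, ← hQv,
      dotProduct_comm]
  set s : ℝ := v ⬝ᵥ (Q *ᵥ v) with hsdef
  -- lower bound : m * (d ⬝ᵥ d) ≤ s
  have hHrquad : v ⬝ᵥ ((Pᵀ * hess x * P) *ᵥ v) = d ⬝ᵥ (hess x *ᵥ d) := by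
    rw [hddef, Matrix.mul_assoc, ← Matrix.mulVec_mulVec, Matrix.dotProduct_mulVec,
      Matrix.vecMul_transpose, ← Matrix.mulVec_mulVec]
  have hlow1 : v ⬝ᵥ ((Pᵀ * hess x * P) *ᵥ v) ≤ s := by
    rw [hsdef, hQfact, hHrfact, quad, quad]
    exact Finset.sum_le_sum fun i _ =>
      mul_le_mul_of_nonneg_right (heσ i) (sq_nonneg _)
  have hlow2 : m * (d ⬝ᵥ d) ≤ d ⬝ᵥ (hess x *ᵥ d) := by
    have h0 := (hlower x).dotProduct_mulVec_nonneg d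
    simp only [Matrix.sub_mulVec, Matrix.smul_mulVec, Matrix.one_mulVec,
      dotProduct_sub, dotProduct_smul, smul_eq_mul, star_trivial] at h0
    linarith
  have hmd : m * (d ⬝ᵥ d) ≤ s := by
    calc m * (d ⬝ᵥ d) ≤ d ⬝ᵥ (hess x *ᵥ d) := hlow2
      _ = v ⬝ᵥ ((Pᵀ * hess x * P) *ᵥ v) := hHrquad.symm
      _ ≤ s := hlow1
  have hddnn : 0 ≤ d ⬝ᵥ d := Finset.sum_nonneg fun i _ => mul_self_nonneg (d i)
  have hsnn : 0 ≤ s := le_trans (by positivity) hmd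
  have hlam2 : lamhat ^ 2 = s := by
    rw [hlamhat, Real.sq_sqrt]; · rw [hsval]
    · rw [← hsval] at hsnn; exact hsnn
  -- analysis part
  set d' : Fin n → ℝ := -d with hd'def
  set φ : ℝ → ℝ := fun t => f (x + t • d') with hφdef
  have hφc : ContDiff ℝ 2 φ :=
    hf.comp (contDiff_const.add (contDiff_id.smul contDiff_const))
  have hshift : ∀ s : ℝ, (fun t : ℝ => φ (s + t)) = fun t : ℝ => f ((x + s • d') + t • d') := by
    intro s; funext t
    simp only [hφdef, add_smul, add_assoc]
  have hφ1 : Differentiable ℝ φ := hφc.differentiable (by norm_num)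
  have hderφ : ∀ s : ℝ, deriv φ s = grad (x + s • d') ⬝ᵥ d' := by
    intro s
    have h1 : deriv φ s = deriv (fun t => φ (s + t)) 0 := by
      rw [deriv_comp_const_add, add_zero]
    rw [h1, hshift s]
    exact hgrad _ _
  have hderφ2 : ∀ s : ℝ, deriv (deriv φ) s = d' ⬝ᵥ (hess (x + s • d') *ᵥ d') := by
    intro s
    have h1 : iteratedDeriv 2 φ s = deriv (deriv φ) s := by
      rw [iteratedDeriv_succ, iteratedDeriv_one]
    have h2 := congrFun (iteratedDeriv_comp_const_add 2 φ s) 0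
    rw [hshift s, hhessq, add_zero] at h2
    rw [← h1, ← h2]
  have hφc' : ContDiff ℝ 1 (deriv φ) := by
    have h2 : ContDiff ℝ (1 + 1) φ := by
      have : ((2 : ℕ) : WithTop ℕ∞) = 1 + 1 := by norm_num
      exact this ▸ hφc
    exact (contDiff_succ_iff_deriv.mp h2).2.2
  have hdφdiff : Differentiable ℝ (deriv φ) := hφc'.differentiable one_ne_zero
  set nd : ℝ := d ⬝ᵥ d with hnddef
  have hnd' : d' ⬝ᵥ d' = nd := by
    rw [hd'def, neg_dotProduct, dotProduct_neg, neg_neg]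
  have hbound : ∀ s : ℝ, deriv (deriv φ) s ≤ M * nd := by
    intro s
    rw [hderφ2]
    have h0 := (hupper (x + s • d')).dotProduct_mulVec_nonneg d'
    simp only [Matrix.sub_mulVec, Matrix.smul_mulVec, Matrix.one_mulVec,
      dotProduct_sub, dotProduct_smul, smul_eq_mul, star_trivial] at h0
    rw [← hnd']; linarith
  set c : ℝ := deriv φ 0 with hcdef
  set χ : ℝ → ℝ := fun t => c + M * nd * t - deriv φ t with hχdef
  set ψ : ℝ → ℝ := fun t => f x + t * c + M * nd * t ^ 2 / 2 - φ t with hψdef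
  have hχder : ∀ t, HasDerivAt χ (M * nd - deriv (deriv φ) t) t := by
    intro t
    have h1 : HasDerivAt (fun t : ℝ => c + M * nd * t) (M * nd) t := by
      exact ((hasDerivAt_const t c).add ((hasDerivAt_id t).const_mul (M * nd))).congr_deriv
        (by ring : (0:ℝ) + M * nd * 1 = M * nd)
    exact h1.sub (hdφdiff t).hasDerivAt
  have hχmono : Monotone χ := monotone_of_deriv_nonneg
    (fun t => (hχder t).differentiableAt)
    (fun t => by rw [(hχder t).deriv]; linarith [hbound t])
  have hχ0 : χ 0 = 0 := by simp [hχdef, hcdef]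
  have hχnn : ∀ t, 0 ≤ t → 0 ≤ χ t := fun t ht => hχ0 ▸ hχmono ht
  have hψder : ∀ t, HasDerivAt ψ (χ t) t := by
    intro t
    have h1 : HasDerivAt (fun t : ℝ => f x + t * c + M * nd * t ^ 2 / 2)
        (c + M * nd * t) t := by
      have h2 := ((hasDerivAt_const t (f x)).add ((hasDerivAt_id t).mul_const c)).add
        (((hasDerivAt_pow 2 t).const_mul (M * nd)).div_const 2)
      exact h2.congr_deriv (by rw [show (2:ℕ) - 1 = 1 from rfl]; push_cast; ring :
        0 + 1 * c + M * nd * (((2:ℕ):ℝ) * t ^ (2 - 1)) / 2 = c + M * nd * t)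
    have h3 := h1.sub (hφ1 t).hasDerivAt
    exact h3
  have hψdiff : Differentiable ℝ ψ := fun t => (hψder t).differentiableAt
  have hψmono : MonotoneOn ψ (Set.Ici (0 : ℝ)) := by
    apply monotoneOn_of_deriv_nonneg (convex_Ici 0) hψdiff.continuous.continuousOn
      (fun t _ => (hψdiff t).differentiableWithinAt)
    intro t ht
    rw [interior_Ici] at ht
    rw [(hψder t).deriv]
    exact hχnn t ht.le
  have hφ0 : φ 0 = f x := by simp [hφdef]
  have hψ0 : ψ 0 = 0 := by simp [hψdef, hφ0]
  have hkey : (0 : ℝ) ≤ ψ (m / M) := by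
    rw [← hψ0]
    exact hψmono Set.self_mem_Ici (Set.mem_Ici.mpr (by positivity)) (by positivity)
  have hc : c = -s := by
    rw [hcdef, hderφ 0, zero_smul, add_zero, ← hgdef, hd'def,
      dotProduct_neg, hsval, hsdef]
  have hfin : φ (m / M) - f x ≤ -(m / (2 * M)) * s := by
    have h2 : ψ (m / M) = f x + (m / M) * c + M * nd * (m / M) ^ 2 / 2 - φ (m / M) := rfl
    rw [h2, hc] at hkey
    have h3 : M * nd * (m / M) ^ 2 / 2 = (m / (2 * M)) * (m * nd) := by
      field_simp
    have h4 : (m / (2 * M)) * (m * nd) ≤ (m / (2 * M)) * s :=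
      mul_le_mul_of_nonneg_left hmd (by positivity)
    rw [h3] at hkey
    have h7 : m / M * -s = -(2 * (m / (2 * M) * s)) := by field_simp
    rw [h7] at hkey
    linarith [hkey, h4]
  have hgoal : f (x + (m / M) • d') = φ (m / M) := rfl
  rw [hgoal, hlam2]
  exact hfin
end

section
/- Let f : ℝⁿ → ℝ be twice continuously differentiable with ∇²f(y) ⪯ M I for all y (M > 0), bounded below with infimum f* attained at some x*, and satisfying the Polyak–Łojasiewicz inequality (1/2)‖∇f(y)‖² ≥ ξ (f(y) − f*) for all y, with ξ > 0. Fix x and suppose the symmetric matrix ∇²f(x) has eigenvalues ordered by magnitude |σ_1| ≥ |σ_2| ≥ … ≥ |σ_n| with orthonormal eigenvectors u_1, …, u_n, and let 1 ≤ p < n with |σ_{p+1}| > 0. Define the truncated positive definite matrix B with the same eigenvectors and eigenvalues 1/|σ_1|, …, 1/|σ_p|, 1/|σ_{p+1}|, …, 1/|σ_{p+1}|, and set d̂ := −B ∇f(x) and t := |σ_{p+1}|²/(M |σ_1|). Then f(x + t d̂) − f(x) ≤ −(|σ_{p+1}|²/(2 M |σ_1|²)) ‖∇f(x)‖² ≤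 −(ξ/M)(|σ_{p+1}|²/|σ_1|²)(f(x) − f*). -/
open Matrix

lemma sum_smul_dot {n : ℕ} (u : Fin n → Fin n → ℝ) (a : Fin n → ℝ) (w : Fin n → ℝ) :
    (∑ i, a i • u i) ⬝ᵥ w = ∑ i, a i * (u i ⬝ᵥ w) := by
  simp only [dotProduct, Finset.sum_apply, Pi.smul_apply, smul_eq_mul, Finset.sum_mul,
    Finset.mul_sum]
  rw [Finset.sum_comm]
  exact Finset.sum_congr rfl fun i _ => Finset.sum_congr rfl fun x _ => by ring

lemma dot_sum_smul {n : ℕ} (u : Fin n → Fin n → ℝ) (b : Fin n → ℝ) (w : Fin n → ℝ) :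
    w ⬝ᵥ (∑ j, b j • u j) = ∑ j, b j * (w ⬝ᵥ u j) := by
  simp only [dotProduct, Finset.sum_apply, Pi.smul_apply, smul_eq_mul, Finset.sum_mul,
    Finset.mul_sum]
  rw [Finset.sum_comm]
  exact Finset.sum_congr rfl fun i _ => Finset.sum_congr rfl fun x _ => by ring

lemma orth_dot {n : ℕ} (u : Fin n → Fin n → ℝ)
    (hortho : ∀ i j : Fin n, u i ⬝ᵥ u j = if i = j then (1 : ℝ) else 0)
    (a b : Fin n → ℝ) :
    (∑ i, a i • u i) ⬝ᵥ (∑ j, b j • u j) = ∑ i, a i * b i := by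
  rw [sum_smul_dot]
  simp only [dot_sum_smul, hortho, mul_ite, mul_one, mul_zero, Finset.sum_ite_eq,
    Finset.mem_univ, if_true]

lemma orth_expand {n : ℕ} (u : Fin n → Fin n → ℝ)
    (hortho : ∀ i j : Fin n, u i ⬝ᵥ u j = if i = j then (1 : ℝ) else 0)
    (v : Fin n → ℝ) : v = ∑ i, (u i ⬝ᵥ v) • u i := by
  set U : Matrix (Fin n) (Fin n) ℝ := Matrix.of u with hU
  have h1 : U * Uᵀ = 1 := by
    ext i j
    simpa [hU, Matrix.mul_apply, Matrix.one_apply, dotProduct] using hortho i j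
  have h2 : Uᵀ * U = 1 := mul_eq_one_comm.mp h1
  have key : Uᵀ *ᵥ (U *ᵥ v) = v := by
    rw [Matrix.mulVec_mulVec, h2, Matrix.one_mulVec]
  have hmv : ∀ w : Fin n → ℝ, Uᵀ *ᵥ w = ∑ i, w i • u i := by
    intro w; funext j
    simp only [Matrix.mulVec, dotProduct, Matrix.transpose_apply, Finset.sum_apply,
      Pi.smul_apply, smul_eq_mul, hU, Matrix.of_apply]
    exact Finset.sum_congr rfl fun i _ => by ring
  calc v = Uᵀ *ᵥ (U *ᵥ v) := key.symm
    _ = ∑ i, (U *ᵥ v) i • u i := hmv _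
    _ = ∑ i, (u i ⬝ᵥ v) • u i := rfl


lemma descent_aux {n : ℕ} (f : (Fin n → ℝ) → ℝ) (grad : (Fin n → ℝ) → Fin n → ℝ)
    (hess : (Fin n → ℝ) → Matrix (Fin n) (Fin n) ℝ)
    (hf : ContDiff ℝ 2 f)
    (hgrad : ∀ x u : Fin n → ℝ, deriv (fun t : ℝ => f (x + t • u)) 0 = grad x ⬝ᵥ u)
    (hhessq : ∀ x u : Fin n → ℝ,
      iteratedDeriv 2 (fun t : ℝ => f (x + t • u)) 0 = u ⬝ᵥ (hess x *ᵥ u))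
    (M : ℝ) (hM : 0 < M)
    (hupper : ∀ y, (M • (1 : Matrix (Fin n) (Fin n) ℝ) - hess y).PosSemidef)
    (x d : Fin n → ℝ) (t : ℝ) (ht : 0 ≤ t) :
    f (x + t • d) ≤ f x + t * (grad x ⬝ᵥ d) + M / 2 * t ^ 2 * (d ⬝ᵥ d) := by
  set K : ℝ := d ⬝ᵥ d with hK
  set φ : ℝ → ℝ := fun s => f (x + s • d) with hφdef
  have hline : ContDiff ℝ 2 (fun s : ℝ => x + s • d) :=
    contDiff_const.add (contDiff_id.smul contDiff_const)
  have hφc : ContDiff ℝ 2 φ := hf.comp hline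
  have hshift : ∀ s : ℝ, (fun r : ℝ => φ (s + r)) = fun r : ℝ => f ((x + s • d) + r • d) := by
    intro s; funext r; show f (x + (s + r) • d) = _; rw [add_smul, add_assoc]
  -- first derivative
  have hderiv : ∀ s, deriv φ s = grad (x + s • d) ⬝ᵥ d := by
    intro s
    have h1 : deriv (fun r : ℝ => φ (s + r)) 0 = deriv φ s := by
      rw [deriv_comp_const_add]; norm_num
    rw [← h1, hshift s, hgrad]
  have hquad : ∀ y (v : Fin n → ℝ), v ⬝ᵥ (hess y *ᵥ v) ≤ M * (v ⬝ᵥ v) := by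
    intro y v
    have h := (hupper y).dotProduct_mulVec_nonneg v
    simp only [RCLike.star_def, sub_mulVec, smul_mulVec, one_mulVec,
      dotProduct_sub, dotProduct_smul, star_trivial] at h
    have : (0:ℝ) ≤ M * (v ⬝ᵥ v) - v ⬝ᵥ (hess y *ᵥ v) := by simpa [smul_eq_mul] using h
    linarith
  -- second derivative
  have hderiv2 : ∀ s, deriv (deriv φ) s = d ⬝ᵥ (hess (x + s • d) *ᵥ d) := by
    intro s
    have h1 : iteratedDeriv 2 (fun r : ℝ => φ (s + r)) 0 = iteratedDeriv 2 φ s := by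
      rw [iteratedDeriv_comp_const_add]; norm_num
    have h2 : iteratedDeriv 2 φ s = d ⬝ᵥ (hess (x + s • d) *ᵥ d) := by
      rw [← h1, hshift s, hhessq]
    rw [← h2, iteratedDeriv_succ, iteratedDeriv_one]
  have hφdiff : Differentiable ℝ φ := hφc.differentiable (by norm_num)
  have hψc : ContDiff ℝ 1 (deriv φ) := by
    have h2 : ContDiff ℝ (1+1) φ := by
      have : ((1:WithTop ℕ∞)+1) = 2 := by norm_num
      rw [this]; exact hφc
    exact ((contDiff_succ_iff_deriv (n := 1)).mp h2).2.2
  have hψdiff : Differentiable ℝ (deriv φ) := hψc.differentiable (by norm_num)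
  -- the auxiliary function
  have hψbound : ∀ s, deriv (deriv φ) s ≤ M * K := by
    intro s; rw [hderiv2 s]; exact hquad _ d
  have hgd0 : deriv φ 0 = grad x ⬝ᵥ d := by rw [hderiv]; norm_num
  -- R s := deriv of Q
  set R : ℝ → ℝ := fun s => grad x ⬝ᵥ d + M * s * K - deriv φ s with hRdef
  have hRderiv : ∀ s, HasDerivAt R (M * K - deriv (deriv φ) s) s := by
    intro s
    have h1 : HasDerivAt (fun s : ℝ => grad x ⬝ᵥ d + M * s * K) (M * K) s := by
      have := ((hasDerivAt_id s).const_mul M).mul_const K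
      have h := this.const_add (grad x ⬝ᵥ d)
      exact h.congr_deriv (by ring)
    exact h1.sub ((hψdiff s).hasDerivAt)
  have hRdiff : Differentiable ℝ R := fun s => (hRderiv s).differentiableAt
  have hRmono : Monotone R := by
    apply monotone_of_deriv_nonneg hRdiff
    intro s
    rw [(hRderiv s).deriv]
    have := hψbound s; linarith
  have hRnonneg : ∀ s : ℝ, 0 ≤ s → 0 ≤ R s := by
    intro s hs
    have h0 : R 0 = 0 := by simp only [hRdef, hgd0]; ring
    have := hRmono hs; rw [h0] at this; exact this
  set Q : ℝ → ℝ := fun s => f x + s * (grad x ⬝ᵥ d) + M / 2 * s ^ 2 * K - φ s with hQdef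
  have hQderiv : ∀ s, HasDerivAt Q (R s) s := by
    intro s
    have h1 : HasDerivAt (fun s : ℝ => f x + s * (grad x ⬝ᵥ d) + M / 2 * s ^ 2 * K)
        (grad x ⬝ᵥ d + M * s * K) s := by
      have hA : HasDerivAt (fun s : ℝ => s * (grad x ⬝ᵥ d)) (grad x ⬝ᵥ d) s := by
        simpa using (hasDerivAt_id s).mul_const (grad x ⬝ᵥ d)
      have hB : HasDerivAt (fun s : ℝ => M / 2 * s ^ 2 * K) (M * s * K) s := by
        have := ((hasDerivAt_pow 2 s).const_mul (M / 2)).mul_const K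
        exact this.congr_deriv (by rw [show (2:ℕ) - 1 = 1 from rfl, pow_one]; push_cast; ring)
      have := (hA.const_add (f x)).add hB
      exact this
    have := h1.sub ((hφdiff s).hasDerivAt)
    exact this
  have hQmono : MonotoneOn Q (Set.Ici (0:ℝ)) := by
    apply monotoneOn_of_deriv_nonneg (convex_Ici 0)
    · exact (Differentiable.continuous (fun s => (hQderiv s).differentiableAt)).continuousOn
    · exact fun s _ => ((hQderiv s).differentiableAt).differentiableWithinAt
    · intro s hs
      rw [(hQderiv s).deriv]
      rw [interior_Ici] at hs
      exact hRnonneg s (le_of_lt hs)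
  have h0 : Q 0 = 0 := by simp [hQdef, hφdef]
  have := hQmono (Set.self_mem_Ici) (Set.mem_Ici.mpr ht) ht
  rw [h0] at this
  simp only [hQdef] at this
  linarith

/-- Let `f : ℝⁿ → ℝ` be twice continuously differentiable
with `∇²f(y) ⪯ M I` for all `y` (`M > 0`), bounded below with infimum attained
at `x*`, satisfying the Polyak–Łojasiewicz inequality
`(1/2)‖∇f(y)‖² ≥ ξ (f(y) − f(x*))` for all `y` with `ξ > 0`.  Fix `x` whose
Hessian `∇²f(x)` has eigenvalues ordered by magnitude `|σ_1| ≥ … ≥ |σ_n|` with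
orthonormal eigenvectors `u_i`, let `1 ≤ p < n` with `|σ_{p+1}| > 0`, and let
`B` be the truncated positive definite matrix with the same eigenvectors and
eigenvalues `1/|σ_1|, …, 1/|σ_p|, 1/|σ_{p+1}|, …, 1/|σ_{p+1}|`
(0-based: eigenvalue `1/|σ_i|` for `i < p`, else `1/|σ_p|`).  With
`d̂ := −B ∇f(x)` and `t := |σ_{p+1}|²/(M |σ_1|)`,
`f(x + t d̂) − f(x) ≤ −(|σ_{p+1}|²/(2 M |σ_1|²)) ‖∇f(x)‖²
  ≤ −(ξ/M)(|σ_{p+1}|²/|σ_1|²)(f(x) − f(x*))`. -/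
theorem stmt19 {n p : ℕ} (hp : 1 ≤ p) (hpn : p < n)
    (f : (Fin n → ℝ) → ℝ) (grad : (Fin n → ℝ) → Fin n → ℝ)
    (hess : (Fin n → ℝ) → Matrix (Fin n) (Fin n) ℝ)
    (hf : ContDiff ℝ 2 f)
    (hgrad : ∀ x u : Fin n → ℝ, deriv (fun t : ℝ => f (x + t • u)) 0 = grad x ⬝ᵥ u)
    (hhessq : ∀ x u : Fin n → ℝ,
      iteratedDeriv 2 (fun t : ℝ => f (x + t • u)) 0 = u ⬝ᵥ (hess x *ᵥ u))
    (hhsymm : ∀ x, (hess x).IsSymm)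
    (M : ℝ) (hM : 0 < M)
    (hupper : ∀ y, (M • (1 : Matrix (Fin n) (Fin n) ℝ) - hess y).PosSemidef)
    (xstar : Fin n → ℝ) (hmin : ∀ y, f xstar ≤ f y)
    (ξ : ℝ) (hξ : 0 < ξ)
    (hPL : ∀ y, ξ * (f y - f xstar) ≤ (1 / 2) * (grad y ⬝ᵥ grad y))
    (x : Fin n → ℝ)
    (σ : Fin n → ℝ) (u : Fin n → Fin n → ℝ)
    (hσmono : ∀ i j : Fin n, i ≤ j → |σ j| ≤ |σ i|)
    (hortho : ∀ i j : Fin n, u i ⬝ᵥ u j = if i = j then (1 : ℝ) else 0)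
    (heig : ∀ i, hess x *ᵥ u i = σ i • u i)
    (hσp : 0 < |σ ⟨p, hpn⟩|)
    (B : Matrix (Fin n) (Fin n) ℝ) (hBsymm : B.IsSymm)
    (hBeig : ∀ i : Fin n,
      B *ᵥ u i = (if (i : ℕ) < p then |σ i|⁻¹ else |σ ⟨p, hpn⟩|⁻¹) • u i) :
    f (x + (|σ ⟨p, hpn⟩| ^ 2 / (M * |σ ⟨0, by omega⟩|)) • -(B *ᵥ grad x)) - f x
        ≤ -(|σ ⟨p, hpn⟩| ^ 2 / (2 * M * |σ ⟨0, by omega⟩| ^ 2)) * (grad x ⬝ᵥ grad x) ∧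
    -(|σ ⟨p, hpn⟩| ^ 2 / (2 * M * |σ ⟨0, by omega⟩| ^ 2)) * (grad x ⬝ᵥ grad x)
        ≤ -(ξ / M) * (|σ ⟨p, hpn⟩| ^ 2 / |σ ⟨0, by omega⟩| ^ 2) * (f x - f xstar) := by
  have h0 : 0 < n := by omega
  set ip : Fin n := ⟨p, hpn⟩ with hipdef
  set i0 : Fin n := ⟨0, h0⟩ with hi0def
  show f (x + (|σ ip| ^ 2 / (M * |σ i0|)) • -(B *ᵥ grad x)) - f x
        ≤ -(|σ ip| ^ 2 / (2 * M * |σ i0| ^ 2)) * (grad x ⬝ᵥ grad x) ∧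
      -(|σ ip| ^ 2 / (2 * M * |σ i0| ^ 2)) * (grad x ⬝ᵥ grad x)
        ≤ -(ξ / M) * (|σ ip| ^ 2 / |σ i0| ^ 2) * (f x - f xstar)
  set g : Fin n → ℝ := grad x with hgdef
  set a : ℝ := |σ i0| with hadef
  set b : ℝ := |σ ip| with hbdef
  have hb : 0 < b := hσp
  have hba : b ≤ a := hσmono i0 ip (by simp [Fin.le_def, hipdef, hi0def])
  have ha : 0 < a := lt_of_lt_of_le hb hba
  set lam : Fin n → ℝ := fun i => if (i : ℕ) < p then |σ i|⁻¹ else b⁻¹ with hlamdef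
  set c : Fin n → ℝ := fun i => u i ⬝ᵥ g with hcdef
  have hexp : g = ∑ i, c i • u i := orth_expand u hortho g
  have hBu : ∀ i, B *ᵥ u i = lam i • u i := hBeig
  have hBg : B *ᵥ g = ∑ i, (lam i * c i) • u i := by
    have hlin : B *ᵥ (∑ i, c i • u i) = ∑ i, c i • (B *ᵥ u i) := by
      show B.mulVecLin (∑ i, c i • u i) = _
      rw [map_sum]
      exact Finset.sum_congr rfl fun i _ => by rw [_root_.map_smul]; rfl
    calc B *ᵥ g = B *ᵥ (∑ i, c i • u i) := by rw [← hexp]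
      _ = ∑ i, c i • (B *ᵥ u i) := hlin
      _ = ∑ i, (lam i * c i) • u i := by
          refine Finset.sum_congr rfl fun i _ => ?_
          rw [hBu i, smul_smul, mul_comm]
  have hSS : g ⬝ᵥ g = ∑ i, c i * c i := by
    have h := orth_dot u hortho c c
    rw [← hexp] at h; exact h
  have hGB : g ⬝ᵥ (B *ᵥ g) = ∑ i, c i * (lam i * c i) := by
    have h := orth_dot u hortho c (fun i => lam i * c i)
    rw [← hexp, ← hBg] at h; exact h
  have hBB : (B *ᵥ g) ⬝ᵥ (B *ᵥ g) = ∑ i, (lam i * c i) * (lam i * c i) := by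
    have h := orth_dot u hortho (fun i => lam i * c i) (fun i => lam i * c i)
    rw [← hBg] at h; exact h
  -- eigenvalue bounds
  have hlamlo : ∀ i, a⁻¹ ≤ lam i := by
    intro i
    simp only [hlamdef]
    split_ifs with hi
    · have h1 : |σ i| ≤ a := hσmono i0 i (by simp [Fin.le_def, hi0def])
      have h2 : b ≤ |σ i| := hσmono i ip (by simp [Fin.le_def, hipdef]; omega)
      exact inv_anti₀ (lt_of_lt_of_le hb h2) h1
    · exact inv_anti₀ hb hba
  have hlamhi : ∀ i, lam i ≤ b⁻¹ := by
    intro i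
    simp only [hlamdef]
    split_ifs with hi
    · have h2 : b ≤ |σ i| := hσmono i ip (by simp [Fin.le_def, hipdef]; omega)
      exact inv_anti₀ hb h2
    · exact le_rfl
  have hlampos : ∀ i, 0 < lam i := fun i => lt_of_lt_of_le (by positivity) (hlamlo i)
  set S : ℝ := g ⬝ᵥ g with hSdef
  have hS0 : 0 ≤ S := by
    rw [hSS]
    exact Finset.sum_nonneg fun i _ => mul_self_nonneg _
  have hP : a⁻¹ * S ≤ g ⬝ᵥ (B *ᵥ g) := by
    rw [hGB, hSS, Finset.mul_sum]
    refine Finset.sum_le_sum fun i _ => ?_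
    have := hlamlo i
    nlinarith [mul_self_nonneg (c i)]
  have hKb : (B *ᵥ g) ⬝ᵥ (B *ᵥ g) ≤ b⁻¹ ^ 2 * S := by
    rw [hBB, hSS, Finset.mul_sum]
    refine Finset.sum_le_sum fun i _ => ?_
    have h1 := hlamhi i
    have h2 := (hlampos i).le
    have h3 : lam i * lam i ≤ b⁻¹ * b⁻¹ := mul_le_mul h1 h1 h2 (by positivity)
    nlinarith [mul_self_nonneg (c i), mul_le_mul_of_nonneg_right h3 (mul_self_nonneg (c i))]
  -- descent step
  set t : ℝ := b ^ 2 / (M * a) with htdef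
  have htpos : 0 < t := by positivity
  have hdesc := descent_aux f grad hess hf hgrad hhessq M hM hupper x (-(B *ᵥ g)) t htpos.le
  rw [dotProduct_neg, neg_dotProduct, dotProduct_neg, neg_neg] at hdesc
  rw [← hgdef] at hdesc
  -- hdesc : f (x + t • -(B *ᵥ g)) ≤ f x + t * -(g ⬝ᵥ (B *ᵥ g)) + M/2 * t^2 * ((B *ᵥ g) ⬝ᵥ (B *ᵥ g))
  constructor
  · have h1 : t * (a⁻¹ * S) = b ^ 2 / (M * a ^ 2) * S := by
      rw [htdef]; ring
    have h2 : M / 2 * t ^ 2 * (b⁻¹ ^ 2 * S) = b ^ 2 / (2 * M * a ^ 2) * S := by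
      rw [htdef]
      have hbne : b ≠ 0 := ne_of_gt hb
      field_simp
    have h3 : b ^ 2 / (M * a ^ 2) * S = 2 * (b ^ 2 / (2 * M * a ^ 2) * S) := by
      ring
    have h4 : t * (a⁻¹ * S) ≤ t * (g ⬝ᵥ (B *ᵥ g)) :=
      mul_le_mul_of_nonneg_left hP htpos.le
    have h5 : M / 2 * t ^ 2 * ((B *ᵥ g) ⬝ᵥ (B *ᵥ g)) ≤ M / 2 * t ^ 2 * (b⁻¹ ^ 2 * S) :=
      mul_le_mul_of_nonneg_left hKb (by positivity)
    have h9 : -(b ^ 2 / (2 * M * a ^ 2)) * S = -(b ^ 2 / (2 * M * a ^ 2) * S) := by ring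
    rw [h9]
    linarith
  · have hc' : (0:ℝ) < b ^ 2 / (M * a ^ 2) := by positivity
    have h6 := mul_le_mul_of_nonneg_left (hPL x) hc'.le
    have h7 : b ^ 2 / (M * a ^ 2) * (1 / 2 * (grad x ⬝ᵥ grad x)) = b ^ 2 / (2 * M * a ^ 2) * S := by
      rw [hSdef, hgdef]; ring
    have h8 : -(ξ / M) * (b ^ 2 / a ^ 2) * (f x - f xstar)
        = -(b ^ 2 / (M * a ^ 2) * (ξ * (f x - f xstar))) := by ring
    have h9 : -(b ^ 2 / (2 * M * a ^ 2)) * S = -(b ^ 2 / (2 * M * a ^ 2) * S) := by ring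
    rw [h8, h9]
    linarith
end
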